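/- arXiv:2010.10414 — 6 statements merged into one kernel-verified Lean document; each statement's English description precedes it below -/
import Mathlib

section
/- Let m and n be nonzero coprime integers and let BS(m,n) = ⟨x, t ∣ t⁻¹ xᵐ t = xⁿ⟩ be the Baumslag–Solitar group. Let L denote the normal closure of x in BS(m,n). Then the abelianization of L (equivalently, the first homology group H₁(L; ℤ)) is isomorphic, as an abelian group, to ℤ[1/(mn)], i.e. to the additive subgroup {q ∈ ℚ : q·(mn)^k ∈ ℤ for some k ∈ ℕ} of the rationals. -/
/-- The single defining relator of the Baumslag–Solitar group `BS(m,n)`: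
`t⁻¹ xᵐ t (xⁿ)⁻¹`, where `x` and `t` are the two generators. -/
def bsRel (m n : ℤ) : Set (FreeGroup Bool) :=
  {(FreeGroup.of false)⁻¹ * (FreeGroup.of true) ^ m * FreeGroup.of false *
    ((FreeGroup.of true) ^ n)⁻¹}

/-- The Baumslag–Solitar group `BS(m,n) = ⟨x, t ∣ t⁻¹ xᵐ t = xⁿ⟩`. -/
abbrev BS (m n : ℤ) : Type := PresentedGroup (bsRel m n)

/-- The generator `x` of `BS(m,n)`. -/
def BS.x (m n : ℤ) : BS m n := PresentedGroup.of true

/-- The generator `t` of `BS(m,n)`. -/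
def BS.t (m n : ℤ) : BS m n := PresentedGroup.of false

/-- The additive subgroup `ℤ[1/(mn)]` of `ℚ`: rationals `q` such that `q·(mn)^k ∈ ℤ`
for some natural number `k`. -/
def zOneOver (m n : ℤ) : AddSubgroup ℚ where
  carrier := {q : ℚ | ∃ (k : ℕ) (z : ℤ), q * ((m * n : ℤ) : ℚ) ^ k = (z : ℚ)}
  zero_mem' := ⟨0, 0, by simp⟩
  add_mem' := by
    rintro a b ⟨k, z, h⟩ ⟨k', z', h'⟩
    refine ⟨k + k', z * (m * n) ^ k' + z' * (m * n) ^ k, ?_⟩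
    push_cast
    push_cast at h h'
    linear_combination ((m : ℚ) * n) ^ k' * h + ((m : ℚ) * n) ^ k * h'
  neg_mem' := by
    rintro a ⟨k, z, h⟩
    exact ⟨k, -z, by push_cast; push_cast at h; linarith⟩

namespace BSAux

open Finsupp Subgroup

/-! ### Basic objects -/

abbrev FB := FreeGroup Bool

def xF : FB := FreeGroup.of true
def tF : FB := FreeGroup.of false

variable (m n : ℤ)

abbrev pr : FB →* BS m n := PresentedGroup.mk (bsRel m n)

/-- The normal closure of `x`. -/
abbrev LL : Subgroup (BS m n) := Subgroup.normalClosure ({BS.x m n} : Set (BS m n))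

/-- The normal closure of `x` in the free group. -/
abbrev FxG : Subgroup FB := Subgroup.normalClosure ({xF} : Set FB)

lemma pr_xF : pr m n xF = BS.x m n := rfl
lemma pr_tF : pr m n tF = BS.t m n := rfl

lemma pr_rel_one : pr m n (tF⁻¹ * xF ^ m * tF * (xF ^ n)⁻¹) = 1 := by
  apply (QuotientGroup.eq_one_iff _).mpr
  exact Subgroup.subset_normalClosure rfl

/-- The main relation in `BS m n`. -/
lemma bs_rel : (BS.t m n)⁻¹ * (BS.x m n) ^ m * BS.t m n * ((BS.x m n) ^ n)⁻¹ = 1 := by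
  have := pr_rel_one m n
  simpa [xF, tF, BS.x, BS.t, PresentedGroup.of] using this

/-! ### degree homomorphisms -/

def degF : FB →* Multiplicative ℤ :=
  FreeGroup.lift fun b => if b then (1 : Multiplicative ℤ) else Multiplicative.ofAdd 1

lemma degF_x : degF xF = 1 := by simp [degF, xF]
lemma degF_t : degF tF = Multiplicative.ofAdd 1 := by simp [degF, tF]

lemma deg_rel : ∀ r ∈ bsRel m n,
    FreeGroup.lift (fun b => if b then (1 : Multiplicative ℤ) else Multiplicative.ofAdd 1) r = 1 := by
  rintro r rfl
  simp

def degBS : BS m n →* Multiplicative ℤ := PresentedGroup.toGroup (deg_rel m n)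

lemma degBS_pr (u : FB) : degBS m n (pr m n u) = degF u := by
  have : (degBS m n).comp (pr m n) = degF := by
    apply FreeGroup.ext_hom
    intro a
    show degBS m n (PresentedGroup.of a) = degF (FreeGroup.of a)
    rw [degBS, PresentedGroup.toGroup.of]
    simp [degF]
  exact DFunLike.congr_fun this u

lemma degBS_x : degBS m n (BS.x m n) = 1 := by
  rw [← pr_xF, degBS_pr, degF_x]

lemma degBS_t : degBS m n (BS.t m n) = Multiplicative.ofAdd 1 := by
  rw [← pr_tF, degBS_pr, degF_t]

lemma LL_le_ker_degBS : LL m n ≤ (degBS m n).ker := by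
  apply Subgroup.normalClosure_le_normal
  intro a ha
  rw [Set.mem_singleton_iff] at ha
  subst ha
  exact degBS_x m n

lemma FxG_le_ker_degF : FxG ≤ degF.ker := by
  apply Subgroup.normalClosure_le_normal
  intro a ha
  rw [Set.mem_singleton_iff] at ha
  subst ha
  exact degF_x

lemma FxG_le_comap : FxG ≤ (LL m n).comap (pr m n) := by
  apply Subgroup.normalClosure_le_normal
  intro a ha
  rw [Set.mem_singleton_iff] at ha
  subst ha
  exact Subgroup.subset_normalClosure rfl

/-- elements of degree zero are in the normal closure of x -/
lemma mem_LL_of_deg (g : BS m n) (hg : degBS m n g = 1) : g ∈ LL m n := by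
  have hker : LL m n ≤ (degBS m n).ker := LL_le_ker_degBS m n
  set Dbar : BS m n ⧸ LL m n →* Multiplicative ℤ :=
    QuotientGroup.lift (LL m n) (degBS m n) (fun x hx => hker hx) with hDbar
  set E : Multiplicative ℤ →* BS m n ⧸ LL m n :=
    zpowersHom _ (QuotientGroup.mk' (LL m n) (BS.t m n)) with hE
  have key : (E.comp Dbar).comp (QuotientGroup.mk' (LL m n)) = QuotientGroup.mk' (LL m n) := by
    apply PresentedGroup.ext
    intro b
    cases b
    · -- t
      show E (Dbar (QuotientGroup.mk' _ (BS.t m n))) = QuotientGroup.mk' _ (BS.t m n)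
      rw [hDbar]
      simp only [QuotientGroup.mk'_apply]
      rw [QuotientGroup.lift_mk']
      rw [degBS_t]
      simp [hE, zpowersHom_apply]
    · -- x
      show E (Dbar (QuotientGroup.mk' _ (BS.x m n))) = QuotientGroup.mk' _ (BS.x m n)
      have hx1 : QuotientGroup.mk' (LL m n) (BS.x m n) = 1 :=
        (QuotientGroup.eq_one_iff _).mpr (Subgroup.subset_normalClosure rfl)
      rw [hDbar]
      simp only [QuotientGroup.mk'_apply]
      rw [QuotientGroup.lift_mk']
      rw [degBS_x]
      simp only [map_one]
      rw [← QuotientGroup.mk'_apply, hx1]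
  have : QuotientGroup.mk' (LL m n) g = 1 := by
    have h1 : E (Dbar (QuotientGroup.mk' (LL m n) g)) = QuotientGroup.mk' (LL m n) g :=
      DFunLike.congr_fun key g
    rw [hDbar] at h1
    simp only [QuotientGroup.mk'_apply] at h1
    rw [QuotientGroup.lift_mk'] at h1
    rw [hg, map_one] at h1
    simpa using h1.symm
  exact (QuotientGroup.eq_one_iff _).mp this

lemma LL_le_map : LL m n ≤ (FxG).map (pr m n) := by
  haveI : ((FxG).map (pr m n)).Normal :=
    Subgroup.Normal.map (Subgroup.normalClosure_normal) _ (PresentedGroup.mk_surjective _)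
  apply Subgroup.normalClosure_le_normal
  intro a ha
  rw [Set.mem_singleton_iff] at ha
  subst ha
  exact ⟨xF, Subgroup.subset_normalClosure rfl, rfl⟩

/-! ### The affine representation -/

noncomputable section

variable (hm : m ≠ 0) (hn : n ≠ 0)

def mu : ℚ := (m : ℚ) / (n : ℚ)

lemma mu_ne (hm : m ≠ 0) (hn : n ≠ 0) : mu m n ≠ 0 :=
  div_ne_zero (Int.cast_ne_zero.2 hm) (Int.cast_ne_zero.2 hn)

def muU (hm : m ≠ 0) (hn : n ≠ 0) : ℚˣ := Units.mk0 (mu m n) (mu_ne m n hm hn)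

def psiGen (hm : m ≠ 0) (hn : n ≠ 0) : Bool → Equiv.Perm ℚ := fun b =>
  if b then Equiv.addLeft (1 : ℚ) else MulAction.toPermHom ℚˣ ℚ (muU m n hm hn)

lemma psi_rel : ∀ r ∈ bsRel m n, FreeGroup.lift (psiGen m n hm hn) r = 1 := by
  rintro r rfl
  have hx : FreeGroup.lift (psiGen m n hm hn) (FreeGroup.of true) = Equiv.addLeft (1:ℚ) := by
    rw [FreeGroup.lift_apply_of]; simp [psiGen]
  have ht : FreeGroup.lift (psiGen m n hm hn) (FreeGroup.of false)
      = MulAction.toPermHom ℚˣ ℚ (muU m n hm hn) := by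
    rw [FreeGroup.lift_apply_of]; simp [psiGen]
  rw [map_mul, map_mul, map_mul, map_inv, map_inv, map_zpow, map_zpow, hx, ht]
  ext q
  rw [show (MulAction.toPermHom ℚˣ ℚ (muU m n hm hn))⁻¹
      = MulAction.toPermHom ℚˣ ℚ (muU m n hm hn)⁻¹ from (map_inv _ _).symm]
  rw [show ((Equiv.addLeft (1:ℚ)) ^ n)⁻¹ = Equiv.addLeft (1:ℚ) ^ (-n) from (zpow_neg _ _).symm]
  rw [Equiv.zsmul_addLeft, Equiv.zsmul_addLeft]
  simp only [Equiv.Perm.mul_apply, Equiv.coe_addLeft, MulAction.toPermHom_apply,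
    MulAction.toPerm_apply, Units.smul_def, Units.val_inv_eq_inv_val, Equiv.Perm.one_apply,
    smul_eq_mul, zsmul_eq_mul, mul_one]
  have hmq : (m:ℚ) ≠ 0 := Int.cast_ne_zero.2 hm
  have hnq : (n:ℚ) ≠ 0 := Int.cast_ne_zero.2 hn
  rw [muU]
  simp only [Units.val_mk0, mu]
  field_simp
  push_cast
  ring

def psi : BS m n →* Equiv.Perm ℚ := PresentedGroup.toGroup (psi_rel m n hm hn)

lemma psi_x : psi m n hm hn (BS.x m n) = Equiv.addLeft (1 : ℚ) := by
  rw [BS.x, psi, PresentedGroup.toGroup.of]; simp [psiGen]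

lemma psi_t : psi m n hm hn (BS.t m n) = MulAction.toPermHom ℚˣ ℚ (muU m n hm hn) := by
  rw [BS.t, psi, PresentedGroup.toGroup.of]; simp [psiGen]

/-! ### The Finsupp action -/

def XP : Equiv.Perm ((ℤ →₀ ℤ) × ℤ) where
  toFun p := (p.1 + single p.2 1, p.2)
  invFun p := (p.1 - single p.2 1, p.2)
  left_inv p := by simp
  right_inv p := by simp

def TP : Equiv.Perm ((ℤ →₀ ℤ) × ℤ) where
  toFun p := (p.1, p.2 - 1)
  invFun p := (p.1, p.2 + 1)
  left_inv p := by simp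
  right_inv p := by simp

def theta : FB →* Equiv.Perm ((ℤ →₀ ℤ) × ℤ) :=
  FreeGroup.lift fun b => if b then XP else TP

lemma theta_x : theta xF = XP := by simp [theta, xF]
lemma theta_t : theta tF = TP := by simp [theta, tF]

/-! ### shift and beta -/

def shiftE (j : ℤ) : (ℤ →₀ ℤ) →+ (ℤ →₀ ℤ) := Finsupp.mapDomain.addMonoidHom (· + j)

lemma shiftE_single (j k c : ℤ) : shiftE j (single k c) = single (k + j) c := by
  rw [shiftE]
  show Finsupp.mapDomain (· + j) (single k c) = single (k + j) c
  rw [Finsupp.mapDomain_single]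

lemma shiftE_zero_apply (w : ℤ →₀ ℤ) : shiftE 0 w = w := by
  have h : shiftE 0 = AddMonoidHom.id (ℤ →₀ ℤ) := by
    apply Finsupp.addHom_ext
    intro k c
    rw [shiftE_single, add_zero]
    rfl
  rw [h]; rfl

lemma shiftE_shiftE (i j : ℤ) (w : ℤ →₀ ℤ) : shiftE j (shiftE i w) = shiftE (i + j) w := by
  have h : (shiftE j).comp (shiftE i) = shiftE (i + j) := by
    apply Finsupp.addHom_ext
    intro k c
    rw [AddMonoidHom.comp_apply, shiftE_single, shiftE_single, shiftE_single, add_assoc]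
  exact DFunLike.congr_fun h w

def beta : (ℤ →₀ ℤ) →+ ℚ := Finsupp.liftAddHom fun k => zmultiplesHom ℚ (mu m n ^ k)

lemma beta_single (k c : ℤ) : beta m n (single k c) = c * mu m n ^ k := by
  rw [beta, Finsupp.liftAddHom_apply_single, zmultiplesHom_apply, zsmul_eq_mul]

lemma beta_shiftE (hm : m ≠ 0) (hn : n ≠ 0) (j : ℤ) (w : ℤ →₀ ℤ) :
    beta m n (shiftE j w) = mu m n ^ j * beta m n w := by
  have h : (beta m n).comp (shiftE j) = (AddMonoidHom.mulLeft (mu m n ^ j)).comp (beta m n) := by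
    apply Finsupp.addHom_ext
    intro k c
    rw [AddMonoidHom.comp_apply, AddMonoidHom.comp_apply, shiftE_single, beta_single]
    show (c : ℚ) * mu m n ^ (k + j) = mu m n ^ j * (beta m n (single k c))
    rw [beta_single, zpow_add₀ (mu_ne m n hm hn)]
    ring
  exact DFunLike.congr_fun h w

/-! ### master structure lemma -/

lemma master (hm : m ≠ 0) (hn : n ≠ 0) (u : FB) : ∃ (w : ℤ →₀ ℤ) (d : ℤ),
    degF u = Multiplicative.ofAdd d ∧
    (∀ v k, theta u (v, k) = (v + shiftE k w, k - d)) ∧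
    (∀ q : ℚ, psi m n hm hn (pr m n u) q = mu m n ^ d * q + mu m n ^ d * beta m n w) := by
  have hmu := mu_ne m n hm hn
  induction u using FreeGroup.induction_on with
  | C1 =>
      refine ⟨0, 0, by simp [ofAdd_zero], ?_, ?_⟩
      · intro v k
        simp only [map_one, Equiv.Perm.one_apply, map_zero, add_zero, sub_zero]
      · intro q
        simp only [map_one, Equiv.Perm.one_apply, map_zero, zpow_zero, one_mul, mul_zero, add_zero]
  | of x =>
      cases x
      · -- false = t
        refine ⟨0, 1, ?_, ?_, ?_⟩
        · show degF tF = _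
          rw [degF_t]
        · intro v k
          rw [show theta (FreeGroup.of false) = TP from theta_t]
          simp only [TP, map_zero, add_zero, Equiv.coe_fn_mk]
        · intro q
          rw [show pr m n (FreeGroup.of false) = BS.t m n from rfl, psi_t]
          simp only [MulAction.toPermHom_apply, MulAction.toPerm_apply, Units.smul_def,
            map_zero, mul_zero, add_zero, zpow_one]
          rw [muU]
          simp [smul_eq_mul]
      · -- true = x
        refine ⟨single 0 1, 0, ?_, ?_, ?_⟩
        · show degF xF = _
          rw [degF_x]; rfl
        · intro v k
          rw [show theta (FreeGroup.of true) = XP from theta_x]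
          simp only [XP, Equiv.coe_fn_mk, shiftE_single, zero_add, sub_zero]
        · intro q
          rw [show pr m n (FreeGroup.of true) = BS.x m n from rfl, psi_x, beta_single]
          simp only [Equiv.coe_addLeft, zpow_zero, one_mul, Int.cast_one]
          ring
  | inv_of x ih =>
      obtain ⟨w, d, h1, h2, h3⟩ := ih
      refine ⟨-(shiftE d w), -d, ?_, ?_, ?_⟩
      · rw [map_inv, h1, ← ofAdd_neg]
      · intro v k
        rw [map_inv]
        rw [Equiv.Perm.inv_eq_iff_eq]
        rw [h2]
        have hz : shiftE k (-(shiftE d w)) + shiftE (k - -d) w = 0 := by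
          rw [map_neg, shiftE_shiftE]
          rw [show k - -d = d + k from by ring]
          simp
        rw [Prod.mk.injEq]
        constructor
        · rw [add_assoc, hz, add_zero]
        · ring
      · intro q
        rw [map_inv, map_inv]
        rw [Equiv.Perm.inv_eq_iff_eq]
        rw [h3, map_neg, beta_shiftE m n hm hn]
        have key : mu m n ^ d * mu m n ^ (-d) = 1 := by
          rw [← zpow_add₀ hmu]; simp
        linear_combination (mu m n ^ d * beta m n w - q) * key
  | mul x y ihx ihy =>
      obtain ⟨wx, dx, hdx, hθx, hψx⟩ := ihx
      obtain ⟨wy, dy, hdy, hθy, hψy⟩ := ihy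
      refine ⟨wy + shiftE (-dy) wx, dx + dy, ?_, ?_, ?_⟩
      · rw [map_mul, hdx, hdy, ← ofAdd_add]
      · intro v k
        rw [map_mul, Equiv.Perm.mul_apply, hθy, hθx]
        rw [map_add, shiftE_shiftE]
        rw [Prod.mk.injEq]
        constructor
        · rw [show -dy + k = k - dy from by ring, add_assoc]
        · ring
      · intro q
        rw [map_mul, map_mul, Equiv.Perm.mul_apply, hψy, hψx]
        rw [map_add, beta_shiftE m n hm hn]
        have key : mu m n ^ (dx + dy) * mu m n ^ (-dy) = mu m n ^ dx := by
          rw [← zpow_add₀ hmu, show dx + dy + -dy = dx from by ring]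
        have key2 : mu m n ^ (dx + dy) = mu m n ^ dx * mu m n ^ dy := by
          rw [← zpow_add₀ hmu]
        linear_combination (-(beta m n wx)) * key + (-(q + beta m n wy)) * key2

end

/-! ### membership in zOneOver -/

lemma mu_zpow_mem (hm : m ≠ 0) (hn : n ≠ 0) (k : ℤ) : mu m n ^ k ∈ zOneOver m n := by
  have hmq : (m:ℚ) ≠ 0 := Int.cast_ne_zero.2 hm
  have hnq : (n:ℚ) ≠ 0 := Int.cast_ne_zero.2 hn
  rcases k with a | a
  · refine ⟨a, m ^ (2*a), ?_⟩
    rw [Int.ofNat_eq_coe, zpow_natCast, mu]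
    push_cast
    rw [div_pow]
    field_simp
    ring
  · refine ⟨a+1, n ^ (2*(a+1)), ?_⟩
    rw [zpow_negSucc, mu]
    push_cast
    rw [div_pow]
    field_simp
    ring

lemma beta_mem (hm : m ≠ 0) (hn : n ≠ 0) (v : ℤ →₀ ℤ) : beta m n v ∈ zOneOver m n := by
  induction v using Finsupp.induction_linear with
  | zero => rw [map_zero]; exact (zOneOver m n).zero_mem
  | add f g hf hg => rw [map_add]; exact (zOneOver m n).add_mem hf hg
  | single k c =>
      rw [beta_single, ← zsmul_eq_mul]
      exact AddSubgroup.zsmul_mem _ (mu_zpow_mem m n hm hn k) c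

/-! ### the relation subgroup M -/

noncomputable def genM (k : ℤ) : ℤ →₀ ℤ := single k m - single (k + 1) n

noncomputable def MM : AddSubgroup (ℤ →₀ ℤ) := AddSubgroup.closure (Set.range (genM m n))

lemma genM_mem (k : ℤ) : genM m n k ∈ MM m n :=
  AddSubgroup.subset_closure (Set.mem_range_self k)

lemma beta_genM (hm : m ≠ 0) (hn : n ≠ 0) (k : ℤ) : beta m n (genM m n k) = 0 := by
  have hnq : (n:ℚ) ≠ 0 := Int.cast_ne_zero.2 hn
  rw [genM, map_sub, beta_single, beta_single, zpow_add₀ (mu_ne m n hm hn), zpow_one, mu]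
  field_simp
  ring

lemma abelian_key (hm : m ≠ 0) (hn : n ≠ 0) (hco : IsCoprime m n) :
    ∀ (d : ℕ) (A : ℤ) (v : ℤ →₀ ℤ),
      (∀ k, v k ≠ 0 → A ≤ k ∧ k ≤ A + d) → beta m n v = 0 → v ∈ MM m n := by
  have hmq : (m:ℚ) ≠ 0 := Int.cast_ne_zero.2 hm
  have hnq : (n:ℚ) ≠ 0 := Int.cast_ne_zero.2 hn
  intro d
  induction d with
  | zero =>
      intro A v hsupp hβ
      have hv : v = single A (v A) := by
        ext k
        by_cases hk : k = A
        · subst hk; rw [Finsupp.single_eq_same]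
        · rw [Finsupp.single_eq_of_ne' (fun h => hk h.symm)]
          by_contra h
          obtain ⟨h1, h2⟩ := hsupp k h
          simp only [Nat.cast_zero, add_zero] at h2
          omega
      rw [hv, beta_single] at hβ
      have : (v A : ℚ) = 0 := by
        rcases mul_eq_zero.mp hβ with h | h
        · exact h
        · exact absurd h (zpow_ne_zero _ (mu_ne m n hm hn))
      have hva : v A = 0 := by exact_mod_cast this
      rw [hv, hva, Finsupp.single_zero]
      exact (MM m n).zero_mem
  | succ d IH =>
      intro A v hsupp hβ
      set B : ℤ := A + (d + 1 : ℕ) with hB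
      -- the integer sum
      set S : ℤ := ∑ k ∈ v.support, v k * m ^ (k - A).toNat * n ^ (B - k).toNat with hS
      have hsum : beta m n v = ∑ k ∈ v.support, (v k : ℚ) * mu m n ^ k := by
        rw [beta, Finsupp.liftAddHom_apply, Finsupp.sum]
        exact Finset.sum_congr rfl fun k _ => by
          rw [zmultiplesHom_apply, zsmul_eq_mul]
      have hbound : ∀ k ∈ v.support, A ≤ k ∧ k ≤ B := by
        intro k hk
        exact hsupp k (Finsupp.mem_support_iff.mp hk)
      have hScast : (S : ℚ) = (beta m n v) * ((n:ℚ) ^ B * (m:ℚ) ^ (-A)) := by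
        rw [hsum, Finset.sum_mul, hS]
        push_cast
        apply Finset.sum_congr rfl
        intro k hk
        obtain ⟨h1, h2⟩ := hbound k hk
        have e1 : ((m:ℚ)) ^ ((k - A).toNat) = (m:ℚ) ^ (k - A) := by
          rw [← zpow_natCast, Int.toNat_of_nonneg (by omega)]
        have e2 : ((n:ℚ)) ^ ((B - k).toNat) = (n:ℚ) ^ (B - k) := by
          rw [← zpow_natCast, Int.toNat_of_nonneg (by omega)]
        rw [e1, e2, zpow_sub₀ hmq, zpow_sub₀ hnq, mu, div_zpow, zpow_neg]
        rw [div_eq_mul_inv, div_eq_mul_inv, div_eq_mul_inv]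
        ring
      have hS0 : S = 0 := by
        have : (S:ℚ) = 0 := by rw [hScast, hβ, zero_mul]
        exact_mod_cast this
      -- divisibility
      have hdvd : n ∣ v B := by
        have hdvd1 : n ∣ v B * m ^ (B - A).toNat := by
          by_cases hBmem : B ∈ v.support
          · have hsplit : S = v B * m ^ (B - A).toNat * n ^ (B - B).toNat +
                ∑ k ∈ v.support.erase B, v k * m ^ (k - A).toNat * n ^ (B - k).toNat := by
              rw [hS, ← Finset.add_sum_erase _ _ hBmem]
            have : (B - B).toNat = 0 := by omega
            rw [this, pow_zero, mul_one] at hsplit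
            have hrest : n ∣ ∑ k ∈ v.support.erase B, v k * m ^ (k - A).toNat * n ^ (B - k).toNat := by
              apply Finset.dvd_sum
              intro k hk
              have hkB : k ≠ B := Finset.ne_of_mem_erase hk
              have hk2 := hbound k (Finset.mem_of_mem_erase hk)
              have : (B - k).toNat ≠ 0 := by omega
              exact dvd_mul_of_dvd_right (dvd_pow_self n this) _
            have : v B * m ^ (B - A).toNat = S - ∑ k ∈ v.support.erase B,
                v k * m ^ (k - A).toNat * n ^ (B - k).toNat := by
              rw [hsplit]; ring
            rw [this, hS0, zero_sub]
            exact dvd_neg.mpr hrest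
          · rw [Finsupp.notMem_support_iff.mp hBmem, zero_mul]
            exact dvd_zero n
        exact (IsCoprime.pow_right hco.symm).dvd_of_dvd_mul_right hdvd1
      obtain ⟨c, hc⟩ := hdvd
      -- kill the top coefficient
      have hBsub : B - 1 + 1 = B := by ring
      set v' : ℤ →₀ ℤ := v + c • genM m n (B - 1) with hv'
      have hv'app : ∀ k, v' k = v k + c * ((single (B-1) m : ℤ →₀ ℤ) k - (single B n : ℤ →₀ ℤ) k) := by
        intro k
        rw [hv', Finsupp.add_apply, Finsupp.smul_apply, genM, hBsub, Finsupp.sub_apply,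
          smul_eq_mul]
      have hsupp' : ∀ k, v' k ≠ 0 → A ≤ k ∧ k ≤ A + d := by
        intro k hk
        by_cases hkB : k = B
        · exfalso
          apply hk
          rw [hv'app, hkB, hc]
          rw [Finsupp.single_eq_of_ne (by omega), Finsupp.single_eq_same]
          ring
        · by_cases hkB1 : k = B - 1
          · constructor <;> omega
          · have : v' k = v k := by
              rw [hv'app, Finsupp.single_eq_of_ne' (fun h => hkB1 h.symm),
                Finsupp.single_eq_of_ne' (fun h => hkB h.symm)]
              ring
            rw [this] at hk
            obtain ⟨h1, h2⟩ := hsupp k hk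
            constructor <;> omega
      have hβ' : beta m n v' = 0 := by
        rw [hv', map_add, map_zsmul, beta_genM m n hm hn, smul_zero, add_zero, hβ]
      have hmem' : v' ∈ MM m n := IH A v' hsupp' hβ'
      have : v = v' - c • genM m n (B - 1) := by rw [hv']; abel
      rw [this]
      exact AddSubgroup.sub_mem _ hmem' (AddSubgroup.zsmul_mem _ (genM_mem m n _) c)

lemma beta_zero_mem (hm : m ≠ 0) (hn : n ≠ 0) (hco : IsCoprime m n) (v : ℤ →₀ ℤ)
    (hβ : beta m n v = 0) : v ∈ MM m n := by
  by_cases hv : v = 0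
  · rw [hv]; exact (MM m n).zero_mem
  · have hne : v.support.Nonempty := Finsupp.support_nonempty_iff.mpr hv
    set A := v.support.min' hne with hA
    set B := v.support.max' hne with hBd
    have hAB : A ≤ B := Finset.min'_le _ _ (Finset.max'_mem _ _)
    apply abelian_key m n hm hn hco (B - A).toNat A v _ hβ
    intro k hk
    have hkmem : k ∈ v.support := Finsupp.mem_support_iff.mpr hk
    have h1 : A ≤ k := Finset.min'_le _ _ hkmem
    have h2 : k ≤ B := Finset.le_max' _ _ hkmem
    constructor <;> omega

/-! ### the map into the abelianization -/

def xLQ (k : ℤ) : BS m n := BS.t m n ^ k * BS.x m n * BS.t m n ^ (-k)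

lemma xLQ_mem (k : ℤ) : xLQ m n k ∈ LL m n := by
  have hx : BS.x m n ∈ LL m n := Subgroup.subset_normalClosure rfl
  have h := (Subgroup.normalClosure_normal (s := ({BS.x m n} : Set (BS m n)))).conj_mem
    _ hx (BS.t m n ^ k)
  rw [xLQ, zpow_neg]
  exact h

noncomputable def TT : (ℤ →₀ ℤ) →+ Additive (Abelianization ↥(LL m n)) :=
  Finsupp.liftAddHom fun k => zmultiplesHom _
    (Additive.ofMul (Abelianization.of (⟨xLQ m n k, xLQ_mem m n k⟩ : LL m n)))

lemma TT_single (k c : ℤ) : TT m n (single k c)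
    = c • Additive.ofMul (Abelianization.of (⟨xLQ m n k, xLQ_mem m n k⟩ : LL m n)) := by
  rw [TT, Finsupp.liftAddHom_apply_single, zmultiplesHom_apply]

lemma xLQ_rel (k : ℤ) : (xLQ m n k) ^ m * ((xLQ m n (k + 1)) ^ n)⁻¹ = 1 := by
  have h1 : (BS.t m n)⁻¹ * (BS.x m n) ^ m * BS.t m n = (BS.x m n) ^ n :=
    mul_inv_eq_one.mp (bs_rel m n)
  have h2 : (BS.x m n) ^ m = BS.t m n * (BS.x m n) ^ n * (BS.t m n)⁻¹ := by
    rw [← h1]; group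
  rw [xLQ, xLQ]
  rw [show BS.t m n ^ k * BS.x m n * BS.t m n ^ (-k) = BS.t m n ^ k * BS.x m n * (BS.t m n ^ k)⁻¹
    from by rw [zpow_neg]]
  rw [show BS.t m n ^ (k+1) * BS.x m n * BS.t m n ^ (-(k+1))
      = BS.t m n ^ (k+1) * BS.x m n * (BS.t m n ^ (k+1))⁻¹ from by rw [zpow_neg]]
  rw [conj_zpow, conj_zpow, h2]
  group

lemma TT_genM (k : ℤ) : TT m n (genM m n k) = 0 := by
  rw [genM, map_sub, TT_single, TT_single]
  have : ((⟨xLQ m n k, xLQ_mem m n k⟩ : LL m n) ^ m)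
      * ((⟨xLQ m n (k+1), xLQ_mem m n (k+1)⟩ : LL m n) ^ n)⁻¹ = 1 := by
    apply Subtype.ext
    push_cast
    exact xLQ_rel m n k
  have h2 := congrArg Abelianization.of this
  rw [map_mul, map_inv, map_zpow, map_zpow, map_one] at h2
  have h3 := congrArg Additive.ofMul h2
  rw [ofMul_mul, ofMul_inv, ofMul_zpow, ofMul_zpow, ofMul_one] at h3
  rw [sub_eq_add_neg]
  exact h3

lemma MM_le_ker : MM m n ≤ (TT m n).ker := by
  rw [MM]
  rw [AddSubgroup.closure_le]
  rintro w ⟨k, rfl⟩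
  exact TT_genM m n k

/-! ### Claim 1: the Reidemeister–Schreier style computation -/

lemma claim1 (hm : m ≠ 0) (hn : n ≠ 0) {u : FB} (hu : u ∈ FxG) :
    ∀ hu' : pr m n u ∈ LL m n,
      Additive.ofMul (Abelianization.of (⟨pr m n u, hu'⟩ : LL m n))
        = TT m n ((theta u ((0 : ℤ →₀ ℤ), (0:ℤ))).1) := by
  have hu2 : u ∈ Subgroup.closure (Group.conjugatesOfSet ({xF} : Set FB)) := hu
  refine Subgroup.closure_induction
    (p := fun g _ => ∀ hu' : pr m n g ∈ LL m n,
      Additive.ofMul (Abelianization.of (⟨pr m n g, hu'⟩ : LL m n))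
        = TT m n ((theta g ((0 : ℤ →₀ ℤ), (0:ℤ))).1))
    ?_ ?_ ?_ ?_ hu2
  · -- conjugates of x
    intro g hg
    obtain ⟨a, ha, hconj⟩ := Group.mem_conjugatesOfSet_iff.mp hg
    rw [Set.mem_singleton_iff] at ha
    subst ha
    obtain ⟨c, rfl⟩ := isConj_iff.mp hconj
    intro hu'
    obtain ⟨w, d, hdeg, hθ, -⟩ := master m n hm hn c
    obtain ⟨w', d', hdeg', hθ', -⟩ := master m n hm hn c⁻¹
    have hd' : d' = -d := by
      rw [map_inv, hdeg, ← ofAdd_neg] at hdeg'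
      exact (Multiplicative.ofAdd.injective hdeg'.symm)
    have hcinv : theta c⁻¹ ((0 : ℤ →₀ ℤ), (0:ℤ)) = (w', d) := by
      rw [hθ', hd']
      rw [shiftE_zero_apply]
      rw [zero_add, zero_sub, neg_neg]
    have hw0 : w' + shiftE d w = 0 := by
      have h2 : theta c (theta c⁻¹ ((0 : ℤ →₀ ℤ), (0:ℤ))) = ((0 : ℤ →₀ ℤ), (0:ℤ)) := by
        rw [← Equiv.Perm.mul_apply, ← map_mul, mul_inv_cancel, map_one, Equiv.Perm.one_apply]
      rw [hcinv, hθ] at h2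
      exact (Prod.mk.injEq _ _ _ _).mp h2 |>.1
    have hθg : theta (c * xF * c⁻¹) ((0 : ℤ →₀ ℤ), (0:ℤ)) = (single d 1, 0) := by
      rw [map_mul, map_mul, Equiv.Perm.mul_apply, Equiv.Perm.mul_apply, hcinv]
      rw [show theta xF = XP from theta_x]
      show theta c ((w' + single d 1 : ℤ →₀ ℤ), d) = _
      rw [hθ]
      have : w' + single d 1 + shiftE d w = single d 1 := by
        have h4 : w' + single d 1 + shiftE d w = single d 1 + (w' + shiftE d w) := by abel
        rw [h4, hw0, add_zero]
      rw [this, sub_self]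
    rw [hθg]
    -- now the left side
    set hBS : BS m n := pr m n c * BS.t m n ^ (-d) with hhBS
    have hmemh : hBS ∈ LL m n := by
      apply mem_LL_of_deg
      rw [hhBS, map_mul, map_zpow, degBS_t, degBS_pr, hdeg]
      rw [show (Multiplicative.ofAdd (1:ℤ)) ^ (-d) = Multiplicative.ofAdd (-d) from by
        rw [← ofAdd_zsmul]; norm_num]
      rw [← ofAdd_add]
      simp
    have hconj2 : pr m n (c * xF * c⁻¹) = hBS * xLQ m n d * hBS⁻¹ := by
      rw [map_mul, map_mul, map_inv, pr_xF, hhBS, xLQ]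
      group
    have hsub : (⟨pr m n (c * xF * c⁻¹), hu'⟩ : LL m n)
        = ⟨hBS, hmemh⟩ * ⟨xLQ m n d, xLQ_mem m n d⟩ * (⟨hBS, hmemh⟩)⁻¹ := by
      apply Subtype.ext
      push_cast
      exact hconj2
    have hof : Abelianization.of (⟨pr m n (c * xF * c⁻¹), hu'⟩ : LL m n)
        = Abelianization.of (⟨xLQ m n d, xLQ_mem m n d⟩ : LL m n) := by
      rw [hsub, map_mul, map_mul, map_inv]
      exact mul_inv_eq_iff_eq_mul.mpr (mul_comm _ _)
    rw [hof]
    rw [show ((single d 1 : ℤ →₀ ℤ), (0:ℤ)).1 = (single d 1 : ℤ →₀ ℤ) from rfl]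
    rw [TT_single, one_zsmul]
  · -- one
    intro hu'
    have h1 : (⟨pr m n 1, hu'⟩ : LL m n) = 1 := Subtype.ext (map_one _)
    rw [h1, map_one, ofMul_one, map_one, Equiv.Perm.one_apply, map_zero]
  · -- mul
    intro a b ha hb iha ihb hu'
    have hpa : pr m n a ∈ LL m n := FxG_le_comap m n ha
    have hpb : pr m n b ∈ LL m n := FxG_le_comap m n hb
    have hsub : (⟨pr m n (a * b), hu'⟩ : LL m n) = ⟨pr m n a, hpa⟩ * ⟨pr m n b, hpb⟩ := by
      apply Subtype.ext
      push_cast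
      exact map_mul _ _ _
    obtain ⟨wa, da, hdega, hθa, -⟩ := master m n hm hn a
    obtain ⟨wb, db, hdegb, hθb, -⟩ := master m n hm hn b
    have hda : da = 0 := by
      have h2 : Multiplicative.ofAdd da = Multiplicative.ofAdd (0:ℤ) := by
        rw [← hdega, FxG_le_ker_degF ha]; rfl
      exact Multiplicative.ofAdd.injective h2
    have hdb : db = 0 := by
      have h2 : Multiplicative.ofAdd db = Multiplicative.ofAdd (0:ℤ) := by
        rw [← hdegb, FxG_le_ker_degF hb]; rfl
      exact Multiplicative.ofAdd.injective h2
    have ha0 : (theta a ((0:ℤ→₀ℤ), (0:ℤ))).1 = wa := by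
      rw [hθa]
      show (0:ℤ→₀ℤ) + shiftE 0 wa = wa
      rw [shiftE_zero_apply, zero_add]
    have hb0 : (theta b ((0:ℤ→₀ℤ), (0:ℤ))).1 = wb := by
      rw [hθb]
      show (0:ℤ→₀ℤ) + shiftE 0 wb = wb
      rw [shiftE_zero_apply, zero_add]
    have hab0 : (theta (a * b) ((0:ℤ→₀ℤ), (0:ℤ))).1 = wb + wa := by
      rw [map_mul, Equiv.Perm.mul_apply, hθb, hdb, sub_zero, hθa]
      show (0:ℤ→₀ℤ) + shiftE 0 wb + shiftE 0 wa = wb + wa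
      rw [shiftE_zero_apply, shiftE_zero_apply, zero_add]
    have e1 := iha hpa
    rw [ha0] at e1
    have e2 := ihb hpb
    rw [hb0] at e2
    rw [hsub, map_mul, ofMul_mul, e1, e2, hab0, map_add, add_comm]
  · -- inv
    intro a ha iha hu'
    have hpa : pr m n a ∈ LL m n := FxG_le_comap m n ha
    have hsub : (⟨pr m n a⁻¹, hu'⟩ : LL m n) = (⟨pr m n a, hpa⟩)⁻¹ := by
      apply Subtype.ext
      push_cast
      exact map_inv _ _
    obtain ⟨wa, da, hdega, hθa, -⟩ := master m n hm hn a
    obtain ⟨wa', da', hdega', hθa', -⟩ := master m n hm hn a⁻¹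
    have hda : da = 0 := by
      have h2 : Multiplicative.ofAdd da = Multiplicative.ofAdd (0:ℤ) := by
        rw [← hdega, FxG_le_ker_degF ha]; rfl
      exact Multiplicative.ofAdd.injective h2
    have hda' : da' = 0 := by
      have h2 : Multiplicative.ofAdd da' = Multiplicative.ofAdd (0:ℤ) := by
        rw [← hdega', FxG_le_ker_degF (inv_mem ha)]; rfl
      exact Multiplicative.ofAdd.injective h2
    have ha0 : (theta a ((0:ℤ→₀ℤ), (0:ℤ))).1 = wa := by
      rw [hθa]
      show (0:ℤ→₀ℤ) + shiftE 0 wa = wa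
      rw [shiftE_zero_apply, zero_add]
    have hainv0 : theta a⁻¹ ((0:ℤ→₀ℤ), (0:ℤ)) = (wa', 0) := by
      rw [hθa', hda', sub_zero, shiftE_zero_apply, zero_add]
    have hw0 : wa' + wa = 0 := by
      have h2 : theta a (theta a⁻¹ ((0:ℤ→₀ℤ), (0:ℤ))) = ((0:ℤ→₀ℤ), (0:ℤ)) := by
        rw [← Equiv.Perm.mul_apply, ← map_mul, mul_inv_cancel, map_one, Equiv.Perm.one_apply]
      rw [hainv0, hθa, hda, sub_zero, shiftE_zero_apply] at h2
      exact (Prod.mk.injEq _ _ _ _).mp h2 |>.1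
    have hwa' : wa' = -wa := eq_neg_of_add_eq_zero_left hw0
    have e1 := iha hpa
    rw [ha0] at e1
    rw [hsub, map_inv, ofMul_inv, e1, hainv0]
    rw [show ((wa' : ℤ→₀ℤ), (0:ℤ)).1 = wa' from rfl, hwa', map_neg]

/-! ### translation properties -/

lemma trans_prop (hm : m ≠ 0) (hn : n ≠ 0) (g : BS m n) (hg : g ∈ LL m n) :
    (∀ q, psi m n hm hn g q = q + psi m n hm hn g 0) ∧ psi m n hm hn g 0 ∈ zOneOver m n := by
  obtain ⟨u, rfl⟩ := PresentedGroup.mk_surjective (bsRel m n) g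
  obtain ⟨w, d, hdeg, -, hψ⟩ := master m n hm hn u
  have hd0 : d = 0 := by
    have h1 : degBS m n (pr m n u) = 1 := LL_le_ker_degBS m n hg
    rw [degBS_pr, hdeg] at h1
    have h2 : Multiplicative.ofAdd d = Multiplicative.ofAdd (0:ℤ) := by rw [h1]; rfl
    exact Multiplicative.ofAdd.injective h2
  subst hd0
  simp only [zpow_zero, one_mul] at hψ
  have h0 : psi m n hm hn (pr m n u) 0 = beta m n w := by rw [hψ 0, zero_add]
  constructor
  · intro q
    rw [hψ q, h0]
  · rw [h0]
    exact beta_mem m n hm hn w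

lemma psi_xLQ (hm : m ≠ 0) (hn : n ≠ 0) (k : ℤ) :
    psi m n hm hn (xLQ m n k) 0 = mu m n ^ k := by
  rw [xLQ, map_mul, map_mul, map_zpow, map_zpow, psi_t, psi_x]
  rw [← map_zpow (MulAction.toPermHom ℚˣ ℚ) (muU m n hm hn) k,
    ← map_zpow (MulAction.toPermHom ℚˣ ℚ) (muU m n hm hn) (-k)]
  simp only [Equiv.Perm.mul_apply, MulAction.toPermHom_apply, MulAction.toPerm_apply,
    Units.smul_def, Equiv.coe_addLeft, smul_eq_mul]
  rw [mul_zero, add_zero, mul_one]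
  rw [show ((muU m n hm hn ^ k : ℚˣ) : ℚ) = ((muU m n hm hn : ℚˣ) : ℚ) ^ k from Units.val_zpow_eq_zpow_val _ _]
  rfl

end BSAux

theorem abelianization_normalClosure_x_iso
    (m n : ℤ) (hm : m ≠ 0) (hn : n ≠ 0) (hco : IsCoprime m n) :
    Nonempty (Additive
        (Abelianization (Subgroup.normalClosure ({BS.x m n} : Set (BS m n)))) ≃+
      zOneOver m n) := by
  classical
  have hmul : ∀ a b : ↥(BSAux.LL m n), BSAux.psi m n hm hn ↑(a*b) 0
      = BSAux.psi m n hm hn ↑a 0 + BSAux.psi m n hm hn ↑b 0 := by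
    intro a b
    have hca : (↑(a*b) : BS m n) = (↑a : BS m n) * ↑b := rfl
    rw [hca, map_mul, Equiv.Perm.mul_apply]
    rw [(BSAux.trans_prop m n hm hn ↑a a.2).1 (BSAux.psi m n hm hn (↑b) 0)]
    rw [add_comm]
  let φ' : ↥(BSAux.LL m n) →* Multiplicative ℚ :=
    MonoidHom.mk' (fun g => Multiplicative.ofAdd (BSAux.psi m n hm hn ↑g 0))
      (fun a b => congrArg Multiplicative.ofAdd (hmul a b))
  let Φm : Abelianization ↥(BSAux.LL m n) →* Multiplicative ℚ := Abelianization.lift φ'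
  let ΦA : Additive (Abelianization ↥(BSAux.LL m n)) →+ ℚ := MonoidHom.toAdditiveLeft Φm
  have hΦA : ∀ g : ↥(BSAux.LL m n),
      ΦA (Additive.ofMul (Abelianization.of g)) = BSAux.psi m n hm hn ↑g 0 := fun g => rfl
  have hofsurj : Function.Surjective
      (Abelianization.of : ↥(BSAux.LL m n) → Abelianization ↥(BSAux.LL m n)) := by
    intro x
    exact QuotientGroup.induction_on x (fun g => ⟨g, rfl⟩)
  have hmem : ∀ a, ΦA a ∈ zOneOver m n := by
    intro a
    obtain ⟨g, hg⟩ := hofsurj (Additive.toMul a)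
    have ha : a = Additive.ofMul (Abelianization.of g) := by rw [hg]; rfl
    rw [ha, hΦA]
    exact (BSAux.trans_prop m n hm hn ↑g g.2).2
  let ΦZ : Additive (Abelianization ↥(BSAux.LL m n)) →+ zOneOver m n :=
    (ΦA.codRestrict _ hmem)
  have hΦZval : ∀ a, (ΦZ a : ℚ) = ΦA a := fun a => rfl
  refine ⟨AddEquiv.ofBijective ΦZ ⟨?_, ?_⟩⟩
  · -- injectivity
    rw [injective_iff_map_eq_zero]
    intro a ha
    have ha0 : ΦA a = 0 := by
      have := congrArg (Subtype.val) ha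
      rw [hΦZval] at this
      exact this
    obtain ⟨g, hg⟩ := hofsurj (Additive.toMul a)
    have hae : a = Additive.ofMul (Abelianization.of g) := by rw [hg]; rfl
    rw [hae, hΦA] at ha0
    obtain ⟨u, humem, hueq⟩ := BSAux.LL_le_map m n g.2
    obtain ⟨w, d, hdeg, hθ, hψ⟩ := BSAux.master m n hm hn u
    have hd0 : d = 0 := by
      have h1 : BSAux.degF u = 1 := BSAux.FxG_le_ker_degF humem
      rw [h1] at hdeg
      have h2 : Multiplicative.ofAdd d = Multiplicative.ofAdd (0:ℤ) := by rw [← hdeg]; rfl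
      exact Multiplicative.ofAdd.injective h2
    subst hd0
    have hθ0 : BSAux.theta u ((0:ℤ→₀ℤ), (0:ℤ)) = (w, 0) := by
      rw [hθ, BSAux.shiftE_zero_apply, zero_add, sub_zero]
    have hβw : BSAux.beta m n w = 0 := by
      have h2 := hψ 0
      rw [zpow_zero, one_mul, one_mul, hueq] at h2
      rw [ha0] at h2
      linarith
    have hwM := BSAux.beta_zero_mem m n hm hn hco w hβw
    have hTT : BSAux.TT m n w = 0 := BSAux.MM_le_ker m n hwM
    have hprmem : BSAux.pr m n u ∈ BSAux.LL m n := by rw [hueq]; exact g.2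
    have hclaim := BSAux.claim1 m n hm hn humem hprmem
    rw [hθ0] at hclaim
    rw [show ((w : ℤ→₀ℤ), (0:ℤ)).1 = w from rfl, hTT] at hclaim
    have hsubt : (⟨BSAux.pr m n u, hprmem⟩ : ↥(BSAux.LL m n)) = g := Subtype.ext hueq
    rw [hsubt] at hclaim
    rw [hae]
    exact hclaim
  · -- surjectivity
    rintro ⟨q, k, z, hz⟩
    obtain ⟨a, b, hab⟩ := (hco.pow : IsCoprime (m ^ (2*k)) (n ^ (2*k)))
    set gk : Additive (Abelianization ↥(BSAux.LL m n)) :=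
      Additive.ofMul (Abelianization.of (⟨BSAux.xLQ m n k, BSAux.xLQ_mem m n k⟩)) with hgk
    set gk' : Additive (Abelianization ↥(BSAux.LL m n)) :=
      Additive.ofMul (Abelianization.of (⟨BSAux.xLQ m n (-(k:ℤ)), BSAux.xLQ_mem m n (-(k:ℤ))⟩)) with hgk'
    refine ⟨(z*a) • gk + (z*b) • gk', Subtype.ext ?_⟩
    rw [hΦZval, map_add, map_zsmul, map_zsmul, hgk, hgk', hΦA, hΦA,
      BSAux.psi_xLQ m n hm hn, BSAux.psi_xLQ m n hm hn]
    show (z*a : ℤ) • (BSAux.mu m n ^ (k:ℤ)) + (z*b : ℤ) • (BSAux.mu m n ^ (-(k:ℤ))) = q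
    rw [zsmul_eq_mul, zsmul_eq_mul, zpow_neg, zpow_natCast]
    have hmq : (m:ℚ) ≠ 0 := Int.cast_ne_zero.2 hm
    have hnq : (n:ℚ) ≠ 0 := Int.cast_ne_zero.2 hn
    have hmuq : BSAux.mu m n ^ (k:ℕ) ≠ 0 := pow_ne_zero _ (BSAux.mu_ne m n hm hn)
    have hab' : ((a:ℚ)) * (m:ℚ) ^ (2*k) + (b:ℚ) * (n:ℚ) ^ (2*k) = 1 := by
      exact_mod_cast congrArg (fun x : ℤ => (x : ℚ)) hab
    have hz' : q * ((m:ℚ) * (n:ℚ)) ^ k = (z:ℚ) := by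
      push_cast at hz
      exact_mod_cast hz
    rw [BSAux.mu]
    rw [div_pow]
    field_simp
    push_cast
    linear_combination (z:ℚ) * hab' - hz'
end

section
/- Let m and n be nonzero integers and let BS(m,n) = ⟨x, t ∣ t⁻¹ xᵐ t = xⁿ⟩. Then for every element g of the normal closure of x in BS(m,n) there exists a positive integer q (one may take q = (|m|·|n|)^S for suitable S depending on g) such that g commutes with x^q, i.e. g x^q g⁻¹ = x^q. -/
/-- The defining relation holds in `BS(m,n)`. -/
lemma BS.rel (m n : ℤ) :
    (BS.t m n)⁻¹ * (BS.x m n) ^ m * BS.t m n = (BS.x m n) ^ n := by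
  have h : PresentedGroup.mk (bsRel m n)
      ((FreeGroup.of false)⁻¹ * (FreeGroup.of true) ^ m * FreeGroup.of false *
        ((FreeGroup.of true) ^ n)⁻¹) = 1 := by
    apply (QuotientGroup.eq_one_iff _).2
    exact Subgroup.subset_normalClosure rfl
  simp only [map_mul, map_inv, map_zpow] at h
  have := mul_eq_one_iff_eq_inv.mp h
  simpa [BS.t, BS.x, PresentedGroup.of] using this

/-- Conjugation identity for all integer multiples. -/
lemma conj_zpow_eq {G : Type*} [Group G] {g a : G} {q r : ℤ}
    (h : g⁻¹ * a ^ q * g = a ^ r) (k : ℤ) : g⁻¹ * a ^ (q * k) * g = a ^ (r * k) := by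
  have h2 := conj_zpow (i := k) (a := g⁻¹) (b := a ^ q)
  rw [inv_inv] at h2
  rw [zpow_mul, ← h2, h, ← zpow_mul]

/-- Conjugation identity for natural multiples of a commuting power. -/
lemma conj_pow_eq {G : Type*} [Group G] {g a : G} {q : ℕ}
    (h : g * a ^ q * g⁻¹ = a ^ q) (k : ℕ) : g * a ^ (q * k) * g⁻¹ = a ^ (q * k) := by
  calc g * a ^ (q * k) * g⁻¹ = g * (a ^ q) ^ k * g⁻¹ := by rw [pow_mul]
    _ = (g * a ^ q * g⁻¹) ^ k := conj_pow.symm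
    _ = (a ^ q) ^ k := by rw [h]
    _ = a ^ (q * k) := (pow_mul a q k).symm

/-- Every element of `BS(m,n)` conjugates a suitable positive power of `x`
into a power of `x`. -/
lemma BS.conj_pow (m n : ℤ) (hm : m ≠ 0) (hn : n ≠ 0) (g : BS m n) :
    ∃ q : ℤ, 0 < q ∧ ∃ r : ℤ, g⁻¹ * (BS.x m n) ^ q * g = (BS.x m n) ^ r := by
  have hg : g ∈ Subgroup.closure (Set.range (PresentedGroup.of : Bool → BS m n)) := by
    rw [PresentedGroup.closure_range_of]; trivial
  induction hg using Subgroup.closure_induction with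
  | mem a ha =>
    obtain ⟨b, rfl⟩ := ha
    cases b with
    | true =>
      refine ⟨1, one_pos, 1, ?_⟩
      show (BS.x m n)⁻¹ * (BS.x m n) ^ (1:ℤ) * BS.x m n = (BS.x m n) ^ (1:ℤ)
      group
    | false =>
      refine ⟨|m|, abs_pos.2 hm, n * m.sign, ?_⟩
      have h := conj_zpow_eq (g := BS.t m n) (a := BS.x m n) (BS.rel m n) m.sign
      rw [Int.mul_sign_self] at h
      show (BS.t m n)⁻¹ * (BS.x m n) ^ |m| * BS.t m n = (BS.x m n) ^ (n * m.sign)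
      rw [Int.abs_eq_natAbs]
      exact h
  | one => exact ⟨1, one_pos, 1, by group⟩
  | mul a b _ _ iha ihb =>
    obtain ⟨q, hq, r, hr⟩ := iha
    obtain ⟨q', hq', r', hr'⟩ := ihb
    refine ⟨q * q', mul_pos hq hq', r' * r, ?_⟩
    have h1 := conj_zpow_eq hr q'
    have h2 := conj_zpow_eq hr' r
    calc (a * b)⁻¹ * (BS.x m n) ^ (q * q') * (a * b)
        = b⁻¹ * (a⁻¹ * (BS.x m n) ^ (q * q') * a) * b := by group
      _ = b⁻¹ * (BS.x m n) ^ (q' * r) * b := by rw [h1, mul_comm r q']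
      _ = (BS.x m n) ^ (r' * r) := h2
  | inv a _ iha =>
    obtain ⟨q, hq, r, hr⟩ := iha
    rcases lt_trichotomy r 0 with h | h | h
    · refine ⟨-r, by omega, -q, ?_⟩
      have key : a * (BS.x m n) ^ r * a⁻¹ = (BS.x m n) ^ q := by
        rw [← hr]; group
      rw [inv_inv, zpow_neg, zpow_neg, ← key]
      group
    · subst h
      refine ⟨q, hq, 0, ?_⟩
      have hx : (BS.x m n) ^ q = 1 := by
        have : a * (a⁻¹ * (BS.x m n) ^ q * a) * a⁻¹ = a * (BS.x m n) ^ (0:ℤ) * a⁻¹ := by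
          rw [hr]
        simpa [mul_assoc] using this
      rw [hx]; group
    · refine ⟨r, h, q, ?_⟩
      rw [inv_inv, ← hr]; group

theorem normalClosure_x_commutes_with_power
    (m n : ℤ) (hm : m ≠ 0) (hn : n ≠ 0) :
    ∀ g ∈ Subgroup.normalClosure ({BS.x m n} : Set (BS m n)),
      ∃ q : ℕ, 0 < q ∧ g * (BS.x m n) ^ q * g⁻¹ = (BS.x m n) ^ q := by
  intro g hg
  unfold Subgroup.normalClosure at hg
  induction hg using Subgroup.closure_induction with
  | mem a ha =>
    rw [Group.mem_conjugatesOfSet_iff] at ha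
    obtain ⟨b, hb, hc⟩ := ha
    rw [Set.mem_singleton_iff] at hb
    subst hb
    rw [isConj_iff] at hc
    obtain ⟨w, rfl⟩ := hc
    obtain ⟨q, hq, r, hr⟩ := BS.conj_pow m n hm hn w
    lift q to ℕ using hq.le with q'
    refine ⟨q', by exact_mod_cast hq, ?_⟩
    have hxq : (BS.x m n) ^ (q' : ℤ) = (BS.x m n) ^ q' := zpow_natCast _ _
    rw [← hxq]
    calc w * BS.x m n * w⁻¹ * (BS.x m n) ^ (q':ℤ) * (w * BS.x m n * w⁻¹)⁻¹
        = w * (BS.x m n * (w⁻¹ * (BS.x m n) ^ (q':ℤ) * w) * (BS.x m n)⁻¹) * w⁻¹ := by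
          group
      _ = w * (BS.x m n * (BS.x m n) ^ r * (BS.x m n)⁻¹) * w⁻¹ := by rw [hr]
      _ = w * (BS.x m n) ^ r * w⁻¹ := by group
      _ = w * (w⁻¹ * (BS.x m n) ^ (q':ℤ) * w) * w⁻¹ := by rw [hr]
      _ = (BS.x m n) ^ (q':ℤ) := by group
  | one => exact ⟨1, one_pos, by group⟩
  | mul a b _ _ iha ihb =>
    obtain ⟨q, hq, ha⟩ := iha
    obtain ⟨q', hq', hb⟩ := ihb
    refine ⟨q * q', Nat.mul_pos hq hq', ?_⟩
    have h1 := conj_pow_eq ha q'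
    have h2 := conj_pow_eq hb q
    rw [mul_comm q' q] at h2
    calc (a * b) * (BS.x m n) ^ (q * q') * (a * b)⁻¹
        = a * (b * (BS.x m n) ^ (q * q') * b⁻¹) * a⁻¹ := by group
      _ = a * (BS.x m n) ^ (q * q') * a⁻¹ := by rw [h2]
      _ = (BS.x m n) ^ (q * q') := h1
  | inv a _ iha =>
    obtain ⟨q, hq, ha⟩ := iha
    refine ⟨q, hq, ?_⟩
    rw [inv_inv]
    conv_lhs => rw [← ha]
    group
end

section
/- Let m and n be nonzero coprime integers with |m| ≠ |n| and let BS(m,n) = ⟨x, t ∣ t⁻¹ xᵐ t = xⁿ⟩. Let H denote the normal closure of x in BS(m,n), and let N be a normal subgroup of BS(m,n) with N ≤ H such that the subgroup generated by N together with x has finite index in H. Then there exists a positive integer q such that x^q ∈ N. -/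
lemma BS.relation (m n : ℤ) :
    (BS.t m n)⁻¹ * (BS.x m n) ^ m * (BS.t m n) = (BS.x m n) ^ n := by
  have h : ((FreeGroup.of false)⁻¹ * (FreeGroup.of true) ^ m * FreeGroup.of false *
      ((FreeGroup.of true) ^ n)⁻¹ : FreeGroup Bool) ∈ Subgroup.normalClosure (bsRel m n) :=
    Subgroup.subset_normalClosure (Set.mem_singleton _)
  have h1 : PresentedGroup.mk (bsRel m n)
      ((FreeGroup.of false)⁻¹ * (FreeGroup.of true) ^ m * FreeGroup.of false *
      ((FreeGroup.of true) ^ n)⁻¹) = 1 := (QuotientGroup.eq_one_iff _).mpr h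
  have h2 : (BS.t m n)⁻¹ * (BS.x m n) ^ m * (BS.t m n) * ((BS.x m n) ^ n)⁻¹ = 1 := by
    simpa [map_mul, map_inv, map_zpow, BS.t, BS.x, PresentedGroup.of] using h1
  rwa [mul_inv_eq_one] at h2

set_option maxHeartbeats 2000000 in
theorem power_of_x_mem_of_finite_relindex
    (m n : ℤ) (hm : m ≠ 0) (hn : n ≠ 0) (hco : IsCoprime m n) (hmn : |m| ≠ |n|)
    (N : Subgroup (BS m n)) (hN : N.Normal)
    (hle : N ≤ Subgroup.normalClosure ({BS.x m n} : Set (BS m n)))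
    (hfin : (N ⊔ Subgroup.closure ({BS.x m n} : Set (BS m n))).relIndex
        (Subgroup.normalClosure ({BS.x m n} : Set (BS m n))) ≠ 0) :
    ∃ q : ℕ, 0 < q ∧ (BS.x m n) ^ q ∈ N := by
  by_contra hcon
  push_neg at hcon
  haveI := hN
  set π : BS m n →* (BS m n ⧸ N) := QuotientGroup.mk' N with hπ
  set X : BS m n ⧸ N := π (BS.x m n) with hXdef
  set T : BS m n ⧸ N := π (BS.t m n) with hTdef
  -- X has infinite order in the quotient
  have hX : ∀ k : ℤ, X ^ k = 1 → k = 0 := by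
    intro k hk
    by_contra hk0
    refine hcon k.natAbs (Int.natAbs_pos.mpr hk0) ?_
    have hk' : X ^ (k.natAbs : ℤ) = 1 := by
      rcases Int.natAbs_eq k with h | h
      · rw [← h, hk]
      · rw [← neg_neg (k.natAbs : ℤ), ← h, zpow_neg, hk, inv_one]
    have : π ((BS.x m n) ^ k.natAbs) = 1 := by
      rw [map_pow, ← zpow_natCast, hk']
    exact (QuotientGroup.eq_one_iff _).mp this
  have hXinj : ∀ j k : ℤ, X ^ j = X ^ k → j = k := by
    intro j k h
    have : X ^ (j - k) = 1 := by rw [zpow_sub, h, mul_inv_cancel]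
    have := hX _ this
    omega
  -- basic objects
  set C : Subgroup (BS m n ⧸ N) := Subgroup.zpowers X with hC
  set H : Subgroup (BS m n ⧸ N) := Subgroup.normalClosure {X} with hH
  haveI hHnorm : H.Normal := Subgroup.normalClosure_normal
  have hXH : X ∈ H := Subgroup.subset_normalClosure (Set.mem_singleton _)
  have hCH : C ≤ H := (Subgroup.zpowers_le).mpr hXH
  -- the relation in the quotient
  have hrel : T⁻¹ * X ^ m * T = X ^ n := by
    have := congrArg π (BS.relation m n)
    simpa [map_mul, map_inv, map_zpow] using this
  -- transfer the finite-index hypothesis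
  have hd : C.relIndex H ≠ 0 := by
    have key1 : Subgroup.map π (Subgroup.normalClosure {BS.x m n}) = H := by
      rw [Subgroup.map_normalClosure _ _ (QuotientGroup.mk'_surjective N),
        Set.image_singleton]
    have key2 : Subgroup.comap π C = N ⊔ Subgroup.closure {BS.x m n} := by
      apply le_antisymm
      · intro g hg
        rw [Subgroup.mem_comap] at hg
        obtain ⟨k, hk⟩ := Subgroup.mem_zpowers_iff.mp hg
        have hmem : g * ((BS.x m n) ^ k)⁻¹ ∈ N := by
          rw [← QuotientGroup.ker_mk' N, MonoidHom.mem_ker, map_mul, map_inv, map_zpow, ← hπ,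
            ← hXdef, ← hk, mul_inv_cancel]
        have : g = (g * ((BS.x m n) ^ k)⁻¹) * (BS.x m n) ^ k := by group
        rw [this]
        have h2 : (BS.x m n) ^ k ∈ Subgroup.closure ({BS.x m n} : Set (BS m n)) :=
          Subgroup.zpow_mem _ (Subgroup.subset_closure (Set.mem_singleton _)) k
        exact mul_mem (Subgroup.mem_sup_left hmem) (Subgroup.mem_sup_right h2)
      · refine sup_le ?_ ?_
        · intro g hg
          rw [Subgroup.mem_comap]
          have : π g = 1 := (QuotientGroup.eq_one_iff _).mpr hg
          rw [this]; exact one_mem _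
        · rw [Subgroup.closure_le]
          intro g hg
          rcases hg with rfl
          exact Subgroup.mem_comap.mpr (Subgroup.mem_zpowers X)
    rw [← key2, Subgroup.relIndex_comap, key1] at hfin
    exact hfin
  -- conjugation automorphisms
  have hmapH : ∀ g : BS m n ⧸ N, Subgroup.map (MulAut.conj g).toMonoidHom H = H := by
    intro g
    apply le_antisymm
    · rintro y ⟨h, hh, rfl⟩
      exact hHnorm.conj_mem h hh g
    · intro h hh
      exact ⟨g⁻¹ * h * g, by simpa using hHnorm.conj_mem h hh g⁻¹, by
        simp [MulAut.conj_apply]; group⟩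
  have hrelindex_comap_conj : ∀ (g : BS m n ⧸ N) (K : Subgroup (BS m n ⧸ N)),
      (K.comap (MulAut.conj g).toMonoidHom).relIndex H = K.relIndex H := by
    intro g K
    rw [Subgroup.relIndex_comap, hmapH]
  -- the two intersected subgroups
  set CT : Subgroup (BS m n ⧸ N) := C.comap (MulAut.conj T).toMonoidHom with hCT
  set CT' : Subgroup (BS m n ⧸ N) := C.comap (MulAut.conj T⁻¹).toMonoidHom with hCT'
  have hCTH : CT.relIndex H ≠ 0 := by rw [hCT, hrelindex_comap_conj]; exact hd
  have hCT'H : CT'.relIndex H ≠ 0 := by rw [hCT', hrelindex_comap_conj]; exact hd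
  set DS : Subgroup (BS m n ⧸ N) := C ⊓ CT with hDS
  set DT : Subgroup (BS m n ⧸ N) := C ⊓ CT' with hDT
  have hDSH : DS.relIndex H ≠ 0 := Subgroup.relIndex_inf_ne_zero hd hCTH
  have hDTH : DT.relIndex H ≠ 0 := Subgroup.relIndex_inf_ne_zero hd hCT'H
  -- DT is the conjugate of DS, so they have the same relindex in H
  have hconj : DT = DS.comap (MulAut.conj T⁻¹).toMonoidHom := by
    ext g
    have e2 : T * (T⁻¹ * g * T⁻¹⁻¹) * T⁻¹ = g := by group
    simp only [hDT, hDS, Subgroup.mem_inf, Subgroup.mem_comap, hCT, hCT',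
      MulEquiv.coe_toMonoidHom, MulAut.conj_apply, e2]
    exact and_comm
  have hDSDT : DS.relIndex H = DT.relIndex H := by
    rw [hconj, hrelindex_comap_conj]
  -- cancel to get relindex within C
  have hDSC : DS ≤ C := inf_le_left
  have hDTC : DT ≤ C := inf_le_left
  have hmul1 : DS.relIndex C * C.relIndex H = DS.relIndex H :=
    Subgroup.relIndex_mul_relIndex DS C H hDSC hCH
  have hmul2 : DT.relIndex C * C.relIndex H = DT.relIndex H :=
    Subgroup.relIndex_mul_relIndex DT C H hDTC hCH
  have hDD : DS.relIndex C = DT.relIndex C :=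
    Nat.eq_of_mul_eq_mul_right (Nat.pos_of_ne_zero hd) (by rw [hmul1, hmul2, hDSDT])
  -- pull back to subgroups of ℤ
  set p : Multiplicative ℤ →* (BS m n ⧸ N) := zpowersHom _ X with hp
  have hpapply : ∀ u : ℤ, p (Multiplicative.ofAdd u) = X ^ u := fun u => rfl
  have hprange : p.range = C := by rw [hp, Subgroup.range_zpowersHom]
  -- generators of the pulled-back subgroups
  obtain ⟨a, ha⟩ := Int.subgroup_cyclic (AddSubgroup.toSubgroup.symm (DS.comap p))
  obtain ⟨b, hb⟩ := Int.subgroup_cyclic (AddSubgroup.toSubgroup.symm (DT.comap p))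
  have hmemS : ∀ u : ℤ, X ^ u ∈ DS ↔ u ∈ AddSubgroup.zmultiples a := by
    intro u
    rw [AddSubgroup.zmultiples_eq_closure, ← ha]
    constructor
    · intro h
      exact h
    · intro h
      exact h
  have hmemT : ∀ u : ℤ, X ^ u ∈ DT ↔ u ∈ AddSubgroup.zmultiples b := by
    intro u
    rw [AddSubgroup.zmultiples_eq_closure, ← hb]
    constructor
    · intro h
      exact h
    · intro h
      exact h
  -- index computations
  have hidxS : DS.relIndex C = a.natAbs := by
    rw [← hprange, ← Subgroup.index_comap,
      show DS.comap p = AddSubgroup.toSubgroup (AddSubgroup.zmultiples a) by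
        rw [AddSubgroup.zmultiples_eq_closure, ← ha]; simp,
      AddSubgroup.index_toSubgroup, Int.index_zmultiples]
  have hidxT : DT.relIndex C = b.natAbs := by
    rw [← hprange, ← Subgroup.index_comap,
      show DT.comap p = AddSubgroup.toSubgroup (AddSubgroup.zmultiples b) by
        rw [AddSubgroup.zmultiples_eq_closure, ← hb]; simp,
      AddSubgroup.index_toSubgroup, Int.index_zmultiples]
  have hab : a.natAbs = b.natAbs := by rw [← hidxS, ← hidxT, hDD]
  -- membership characterizations via conjugation
  have hSmem : ∀ u : ℤ, (T * X ^ u * T⁻¹ ∈ C) ↔ u ∈ AddSubgroup.zmultiples a := by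
    intro u
    rw [← hmemS]
    simp only [hDS, Subgroup.mem_inf, hCT, Subgroup.mem_comap, MulAut.conj_apply]
    constructor
    · intro h; exact ⟨Subgroup.mem_zpowers_iff.mpr ⟨u, rfl⟩, h⟩
    · intro h; exact h.2
  have hTmem : ∀ u : ℤ, (T⁻¹ * X ^ u * T ∈ C) ↔ u ∈ AddSubgroup.zmultiples b := by
    intro u
    rw [← hmemT]
    simp only [hDT, Subgroup.mem_inf, hCT', Subgroup.mem_comap, MulAut.conj_apply, inv_inv]
    constructor
    · intro h; exact ⟨Subgroup.mem_zpowers_iff.mpr ⟨u, rfl⟩, h⟩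
    · intro h; exact h.2
  -- n ∈ aℤ
  have hnS : (n : ℤ) ∈ AddSubgroup.zmultiples a := by
    rw [← hSmem]
    have : T * X ^ n * T⁻¹ = X ^ m := by
      rw [← hrel]; group
    rw [this]
    exact Subgroup.mem_zpowers_iff.mpr ⟨m, rfl⟩
  -- m ∈ bℤ
  have hmT : (m : ℤ) ∈ AddSubgroup.zmultiples b := by
    rw [← hTmem, hrel]
    exact Subgroup.mem_zpowers_iff.mpr ⟨n, rfl⟩
  -- a ≠ 0, b ≠ 0
  have ha0 : a ≠ 0 := by
    rintro rfl
    obtain ⟨k, hk⟩ := hnS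
    simp at hk
    exact hn hk.symm
  have hb0 : b ≠ 0 := by
    rintro rfl
    obtain ⟨k, hk⟩ := hmT
    simp at hk
    exact hm hk.symm
  -- conjugates of the generators
  have haS : a ∈ AddSubgroup.zmultiples a := AddSubgroup.mem_zmultiples a
  have hbT : b ∈ AddSubgroup.zmultiples b := AddSubgroup.mem_zmultiples b
  obtain ⟨a', ha'⟩ := Subgroup.mem_zpowers_iff.mp ((hSmem a).mpr haS)
  obtain ⟨b', hb'⟩ := Subgroup.mem_zpowers_iff.mp ((hTmem b).mpr hbT)
  -- ha' : X ^ a' = T * X ^ a * T⁻¹ ;  hb' : X ^ b' = T⁻¹ * X ^ b * T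
  have ha'T : a' ∈ AddSubgroup.zmultiples b := by
    rw [← hTmem]
    have : T⁻¹ * X ^ a' * T = X ^ a := by rw [ha']; group
    rw [this]
    exact Subgroup.mem_zpowers_iff.mpr ⟨a, rfl⟩
  have hb'S : b' ∈ AddSubgroup.zmultiples a := by
    rw [← hSmem]
    have : T * X ^ b' * T⁻¹ = X ^ b := by rw [hb']; group
    rw [this]
    exact Subgroup.mem_zpowers_iff.mpr ⟨b, rfl⟩
  obtain ⟨k, hk⟩ := AddSubgroup.mem_zmultiples_iff.mp ha'T   -- a' = k • b
  obtain ⟨l, hl⟩ := AddSubgroup.mem_zmultiples_iff.mp hb'S   -- b' = l • a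
  simp only [zsmul_eq_mul, Int.cast_id] at hk hl
  -- conjugation by T⁻¹ of X^b is X^b', raise to powers
  have hconjpow : ∀ j : ℤ, T⁻¹ * X ^ (j * b) * T = X ^ (j * b') := by
    intro j
    have h1 : (MulAut.conj T⁻¹) (X ^ b) = X ^ b' := by
      simp only [MulAut.conj_apply, inv_inv]
      rw [hb']
    have := map_zpow (MulAut.conj T⁻¹) (X ^ b) j
    rw [h1, ← zpow_mul, ← zpow_mul, mul_comm b j, mul_comm b' j] at this
    simpa [MulAut.conj_apply, inv_inv] using this
  -- a = k * b', so a = k * l * a, hence k * l = 1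
  have hkl : a = k * b' := by
    apply hXinj
    rw [← hconjpow k, hk, ha']
    group
  have hkl1 : k * l = 1 := by
    have h0 : a = k * (l * a) := by rw [hl]; exact hkl
    have h2 : a * 1 = a * (k * l) := by ring_nf; linarith [h0]
    exact (mul_left_cancel₀ ha0 h2).symm
  -- n = m₁ * b' where m = m₁ * b
  obtain ⟨m₁, hm₁⟩ := AddSubgroup.mem_zmultiples_iff.mp hmT
  simp only [zsmul_eq_mul, Int.cast_id] at hm₁
  have hnm : n = m₁ * b' := by
    apply hXinj
    have h1 : X ^ n = T⁻¹ * X ^ m * T := hrel.symm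
    have h2 : X ^ m = X ^ (m₁ * b) := by rw [hm₁]
    rw [h1, h2, hconjpow m₁]
  -- |b'| = |b|
  have hlabs : l = 1 ∨ l = -1 := Int.isUnit_iff.mp (IsUnit.of_mul_eq_one (a := l) k (by linarith [hkl1]))
  have hb'abs : b'.natAbs = b.natAbs := by
    rw [← hl]
    rcases hlabs with rfl | rfl <;> simp [hab]
  -- finish
  apply hmn
  have hfinal : m.natAbs = n.natAbs := by
    rw [← hm₁, hnm, Int.natAbs_mul, Int.natAbs_mul, hb'abs]
  rw [Int.abs_eq_natAbs, Int.abs_eq_natAbs, hfinal]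
end

section
/- Let m and n be nonzero integers and let BS(m,n) = ⟨x, t ∣ t⁻¹ xᵐ t = xⁿ⟩, and let H denote the normal closure of x in BS(m,n). Let N be a normal subgroup of BS(m,n) with N ≤ H, and suppose there exist finitely many elements a₁, …, a_s of BS(m,n) such that every element g of BS(m,n) can be written as g = n₀ t^p a_j x^k for some n₀ ∈ N, integers p and k, and some j ∈ {1, …, s}. Then the subgroup generated by N together with x has finite index in H. -/
/-- The degree homomorphism `BS(m,n) → ℤ` sending `t ↦ 1` and `x ↦ 0`. -/
def bsDeg (m n : ℤ) : BS m n →* Multiplicative ℤ :=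
  PresentedGroup.toGroup
    (f := fun b => if b then (1 : Multiplicative ℤ) else Multiplicative.ofAdd 1)
    (by
      intro r hr
      simp only [bsRel, Set.mem_singleton_iff] at hr
      subst hr
      simp only [map_mul, map_inv, map_zpow, FreeGroup.lift_apply_of, if_pos, if_neg,
        Bool.false_eq_true, if_true, if_false]
      group)

theorem bsDeg_x (m n : ℤ) : bsDeg m n (BS.x m n) = 1 :=
  PresentedGroup.toGroup.of _

theorem bsDeg_t (m n : ℤ) : bsDeg m n (BS.t m n) = Multiplicative.ofAdd 1 :=
  PresentedGroup.toGroup.of _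

theorem finite_relindex_of_coset_decomposition
    (m n : ℤ) (hm : m ≠ 0) (hn : n ≠ 0)
    (N : Subgroup (BS m n)) (hN : N.Normal)
    (hle : N ≤ Subgroup.normalClosure ({BS.x m n} : Set (BS m n)))
    (s : ℕ) (a : Fin s → BS m n)
    (hcover : ∀ g : BS m n, ∃ n₀ ∈ N, ∃ (p k : ℤ) (j : Fin s),
      g = n₀ * (BS.t m n) ^ p * a j * (BS.x m n) ^ k) :
    (N ⊔ Subgroup.closure ({BS.x m n} : Set (BS m n))).relIndex
      (Subgroup.normalClosure ({BS.x m n} : Set (BS m n))) ≠ 0 := by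
  classical
  set H := Subgroup.normalClosure ({BS.x m n} : Set (BS m n)) with hH
  set K := N ⊔ Subgroup.closure ({BS.x m n} : Set (BS m n)) with hK
  have hxK : BS.x m n ∈ K := Subgroup.mem_sup_right (Subgroup.subset_closure rfl)
  have hNK : N ≤ K := le_sup_left
  have hxH : BS.x m n ∈ H := Subgroup.subset_normalClosure rfl
  have hker : H ≤ (bsDeg m n).ker := by
    apply Subgroup.normalClosure_le_normal
    intro g hg
    simp only [Set.mem_singleton_iff] at hg
    subst hg
    simp [MonoidHom.mem_ker, bsDeg_x]
  let w : BS m n → ℤ := fun g => Multiplicative.toAdd (bsDeg m n g)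
  let S : Fin s → BS m n := fun j => (BS.t m n) ^ (-(w (a j))) * a j
  let S' : Fin s → H := fun j => if h : S j ∈ H then ⟨S j, h⟩ else 1
  have hsurj : Function.Surjective
      (fun j => (QuotientGroup.mk (S' j) : H ⧸ K.subgroupOf H)) := by
    intro q
    obtain ⟨⟨h, hh⟩, rfl⟩ := QuotientGroup.mk_surjective q
    obtain ⟨n₀, hn₀, p, k, j, hdecomp⟩ := hcover h
    have hφh : bsDeg m n h = 1 := hker hh
    have hφn : bsDeg m n n₀ = 1 := hker (hle hn₀)
    have hp : p = -(w (a j)) := by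
      rw [hdecomp] at hφh
      simp only [map_mul, map_zpow, bsDeg_t, bsDeg_x, hφn, one_mul, one_zpow, mul_one] at hφh
      have := congrArg Multiplicative.toAdd hφh
      simp only [toAdd_mul, toAdd_zpow, toAdd_ofAdd, toAdd_one, smul_eq_mul, mul_one] at this
      simp only [w]
      omega
    have hTA : (BS.t m n) ^ p * a j = n₀⁻¹ * h * ((BS.x m n) ^ k)⁻¹ := by
      rw [hdecomp]; group
    have hSval : S j = (BS.t m n) ^ p * a j := by
      simp only [S, ← hp]
    have hSj : S j ∈ H := by
      rw [hSval, hTA]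
      exact H.mul_mem (H.mul_mem (H.inv_mem (hle hn₀)) hh) (H.inv_mem (H.zpow_mem hxH k))
    refine ⟨j, ?_⟩
    have hS'j : S' j = ⟨S j, hSj⟩ := by simp only [S', dif_pos hSj]
    show (QuotientGroup.mk (S' j) : H ⧸ K.subgroupOf H) = _
    rw [hS'j, QuotientGroup.eq]
    show ((⟨S j, hSj⟩ : H)⁻¹ * ⟨h, hh⟩ : H) ∈ K.subgroupOf H
    rw [Subgroup.mem_subgroupOf]
    show (S j)⁻¹ * h ∈ K
    have : (S j)⁻¹ * h
        = ((BS.t m n) ^ p * a j)⁻¹ * n₀ * ((BS.t m n) ^ p * a j) * (BS.x m n) ^ k := by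
      rw [hSval, hdecomp]; group
    rw [this]
    refine K.mul_mem ?_ (K.zpow_mem hxK k)
    have := hN.conj_mem n₀ hn₀ ((BS.t m n) ^ p * a j)⁻¹
    simpa [mul_assoc] using hNK this
  have : Finite (H ⧸ K.subgroupOf H) := Finite.of_surjective _ hsurj
  exact Subgroup.index_ne_zero_of_finite
end

section
/- For every group G and every natural number n, the group G is cyclic subgroup separable if and only if the direct product ℤⁿ × G is cyclic subgroup separable. -/
lemma not_mem_map_zpowers {G Q : Type*} [Group G] [Group Q] (π : G →* Q) (a b : G)
    (h : ∀ k : ℤ, π a ^ k ≠ π b) : π b ∉ (Subgroup.zpowers a).map π := by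
  rintro ⟨y, hy, hyb⟩
  obtain ⟨k, rfl⟩ := Subgroup.mem_zpowers_iff.mp hy
  exact h k (by simpa using hyb)

def linHom (n N : ℕ) (w : Fin n → ℤ) : (Fin n → Multiplicative ℤ) →* Multiplicative (ZMod N) where
  toFun x := Multiplicative.ofAdd ((↑(∑ i, w i * Multiplicative.toAdd (x i)) : ZMod N))
  map_one' := by simp
  map_mul' x y := by
    simp only [Pi.mul_apply, toAdd_mul, mul_add, Finset.sum_add_distrib, Int.cast_add,
      ofAdd_add]

lemma linHom_apply (n N : ℕ) (w : Fin n → ℤ) (x : Fin n → Multiplicative ℤ) :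
    linHom n N w x = Multiplicative.ofAdd ((↑(∑ i, w i * Multiplicative.toAdd (x i)) : ZMod N)) := rfl

lemma sum_single {n : ℕ} (i : Fin n) (f : Fin n → ℤ) :
    ∑ j, (if j = i then (1:ℤ) else 0) * f j = f i := by
  simp [ite_mul, Finset.sum_ite_eq']

lemma sum_two {n : ℕ} (i j : Fin n) (s u : ℤ) (f : Fin n → ℤ) :
    ∑ x, ((if x = j then s else 0) + (if x = i then u else 0)) * f x = s * f j + u * f i := by
  simp [add_mul, ite_mul, Finset.sum_add_distrib, Finset.sum_ite_eq']

lemma ofAdd_zpow_zmod (N : ℕ) (x : ℤ) (k : ℤ) :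
    (Multiplicative.ofAdd ((x : ZMod N))) ^ k = Multiplicative.ofAdd (((k * x : ℤ) : ZMod N)) := by
  rw [← ofAdd_zsmul]
  congr 1
  push_cast
  rw [zsmul_eq_mul]

lemma int_cast_ne_zero_of_lt (N : ℕ) (v : ℤ) (hv : v ≠ 0) (hlt : v.natAbs < N) :
    ((v : ZMod N)) ≠ 0 := by
  intro h
  have := (ZMod.intCast_zmod_eq_zero_iff_dvd v N).mp h
  exact hv (Int.eq_zero_of_dvd_of_natAbs_lt_natAbs this (by simpa using hlt))

lemma zn_separable (n : ℕ) (a b : Fin n → Multiplicative ℤ) (hb : b ∉ Subgroup.zpowers a) :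
    ∃ (Q : Type) (_ : Group Q) (_ : Finite Q) (π : (Fin n → Multiplicative ℤ) →* Q),
      π b ∉ (Subgroup.zpowers a).map π := by
  by_cases ha : a = 1
  · -- a is trivial, b ≠ 1
    subst ha
    have hb1 : b ≠ 1 := fun h => hb (by rw [h]; exact Subgroup.one_mem _)
    obtain ⟨i, hi⟩ : ∃ i, Multiplicative.toAdd (b i) ≠ 0 := by
      by_contra hc
      push_neg at hc
      exact hb1 (funext fun i => by
        have := hc i
        simpa using congrArg Multiplicative.ofAdd this)
    set v := Multiplicative.toAdd (b i) with hv
    set N := v.natAbs + 1 with hN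
    refine ⟨Multiplicative (ZMod N), inferInstance, inferInstance,
      linHom n N (fun j => if j = i then 1 else 0), ?_⟩
    apply not_mem_map_zpowers
    intro k
    rw [linHom_apply, linHom_apply, sum_single, sum_single]
    simp only [Pi.one_apply, toAdd_one, Int.cast_zero]
    intro h
    have h2 : ((0 : ZMod N)) = ((v : ZMod N)) := by
      have := congrArg Multiplicative.toAdd h
      simpa using this
    exact int_cast_ne_zero_of_lt N v hi (by omega) h2.symm
  · obtain ⟨i, hi⟩ : ∃ i, Multiplicative.toAdd (a i) ≠ 0 := by
      by_contra hc
      push_neg at hc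
      exact ha (funext fun i => by
        have := hc i
        simpa using congrArg Multiplicative.ofAdd this)
    set t := Multiplicative.toAdd (a i) with ht
    by_cases hd : ∀ j, t * Multiplicative.toAdd (b j)
        = Multiplicative.toAdd (a j) * Multiplicative.toAdd (b i)
    · -- rationally dependent: t does not divide B i
      have htB : ¬ t ∣ Multiplicative.toAdd (b i) := by
        rintro ⟨k, hk⟩
        apply hb
        refine ⟨k, funext fun j => ?_⟩
        have h1 : t * Multiplicative.toAdd (b j) = t * (k * Multiplicative.toAdd (a j)) := by
          rw [hd j, hk]; ring
        have h2 : Multiplicative.toAdd (b j) = k * Multiplicative.toAdd (a j) :=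
          mul_left_cancel₀ hi h1
        refine Multiplicative.toAdd.injective ?_
        show Multiplicative.toAdd ((a ^ k) j) = Multiplicative.toAdd (b j)
        rw [Pi.pow_apply, toAdd_zpow, h2, smul_eq_mul]
      set N := (t * t).natAbs with hNdef
      haveI : NeZero N := ⟨by
        simp only [hNdef, Int.natAbs_mul]
        positivity⟩
      refine ⟨Multiplicative (ZMod N), inferInstance, inferInstance,
        linHom n N (fun j => if j = i then 1 else 0), ?_⟩
      apply not_mem_map_zpowers
      intro k
      rw [linHom_apply, linHom_apply, sum_single, sum_single]
      rw [ofAdd_zpow_zmod]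
      intro h
      have h2 : ((k * t : ℤ) : ZMod N) = ((Multiplicative.toAdd (b i) : ℤ) : ZMod N) := by
        have := congrArg Multiplicative.toAdd h
        simpa using this
      have h3 : (N : ℤ) ∣ k * t - Multiplicative.toAdd (b i) := by
        rwa [← ZMod.intCast_zmod_eq_zero_iff_dvd, Int.cast_sub, sub_eq_zero]
      have h4 : t ∣ (N : ℤ) := Int.dvd_natAbs.mpr ⟨t, rfl⟩
      have h5 : t ∣ Multiplicative.toAdd (b i) := by
        have := dvd_sub (dvd_mul_left t k) (h4.trans h3)
        simpa using this
      exact htB h5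
    · push_neg at hd
      obtain ⟨j, hj⟩ := hd
      set v := t * Multiplicative.toAdd (b j)
        - Multiplicative.toAdd (a j) * Multiplicative.toAdd (b i) with hvdef
      have hv : v ≠ 0 := sub_ne_zero.mpr hj
      set N := v.natAbs + 1 with hN
      refine ⟨Multiplicative (ZMod N), inferInstance, inferInstance,
        linHom n N (fun x => (if x = j then t else 0)
          + (if x = i then -(Multiplicative.toAdd (a j)) else 0)), ?_⟩
      apply not_mem_map_zpowers
      intro k
      rw [linHom_apply, linHom_apply, sum_two, sum_two]
      have e1 : t * Multiplicative.toAdd (a j)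
          + -(Multiplicative.toAdd (a j)) * Multiplicative.toAdd (a i) = 0 := by
        rw [← ht]; ring
      have e2 : t * Multiplicative.toAdd (b j)
          + -(Multiplicative.toAdd (a j)) * Multiplicative.toAdd (b i) = v := by
        rw [hvdef]; ring
      rw [e1, e2]
      simp only [Int.cast_zero]
      rw [show ((0:ZMod N) = ((0:ℤ) : ZMod N)) by simp, ofAdd_zpow_zmod]
      intro h
      have h2 : ((k * 0 : ℤ) : ZMod N) = ((v : ℤ) : ZMod N) := by
        have := congrArg Multiplicative.toAdd h
        simpa using this
      rw [mul_zero] at h2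
      exact int_cast_ne_zero_of_lt N v hv (by omega) (by simpa using h2.symm)


/-- A group `G` is cyclic subgroup separable if for every `c ∈ G` and every `h ∈ G`
not lying in the cyclic subgroup `⟨c⟩`, there is a homomorphism `π` to a finite
group with `π h ∉ π(⟨c⟩)`. -/
def CyclicSubgroupSeparable (G : Type*) [Group G] : Prop :=
  ∀ c h : G, h ∉ Subgroup.zpowers c →
    ∃ (Q : Type) (_ : Group Q) (_ : Finite Q) (π : G →* Q),
      π h ∉ (Subgroup.zpowers c).map π

theorem cyclicSubgroupSeparable_iff_zn_prod
    (G : Type) [Group G] (n : ℕ) :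
    CyclicSubgroupSeparable G ↔
      CyclicSubgroupSeparable ((Fin n → Multiplicative ℤ) × G) := by
  constructor
  · intro hG
    rintro ⟨a, c⟩ ⟨b, h⟩ hpq
    by_cases hh : h ∈ Subgroup.zpowers c
    · obtain ⟨m, rfl⟩ := Subgroup.mem_zpowers_iff.mp hh
      by_cases hbz : b ∈ Subgroup.zpowers a
      · obtain ⟨k₀, rfl⟩ := Subgroup.mem_zpowers_iff.mp hbz
        have ha1 : a ≠ 1 := by
          rintro rfl
          exact hpq ⟨m, by simp [Prod.ext_iff]⟩
        obtain ⟨i, hi⟩ : ∃ i, Multiplicative.toAdd (a i) ≠ 0 := by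
          by_contra hc
          push_neg at hc
          exact ha1 (funext fun i => by
            have := hc i
            simpa using congrArg Multiplicative.ofAdd this)
        set t := Multiplicative.toAdd (a i) with ht
        have hc : c ^ (m - k₀) ≠ 1 := by
          intro hcc
          apply hpq
          refine ⟨k₀, ?_⟩
          have hcm : c ^ m = c ^ k₀ := by
            rw [zpow_sub, mul_inv_eq_one] at hcc
            exact hcc
          simp [Prod.ext_iff, hcm]
        obtain ⟨Q, hQg, hQf, π', hπ'⟩ := hG 1 (c ^ (m - k₀)) (by
          intro hmem
          obtain ⟨k, hk⟩ := Subgroup.mem_zpowers_iff.mp hmem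
          exact hc (by rw [← hk]; simp))
        have hπ1 : π' (c ^ (m - k₀)) ≠ 1 := by
          intro h1
          exact hπ' ⟨1, Subgroup.one_mem _, by simp [h1]⟩
        set u := π' c with hu
        set d := orderOf u with hd
        have hd0 : 0 < d := orderOf_pos u
        have hdnm : ¬ ((d : ℤ) ∣ (m - k₀)) := by
          intro hdvd
          apply hπ1
          rw [map_zpow, ← hu, ← orderOf_dvd_iff_zpow_eq_one]
          exact_mod_cast hdvd
        set N := d * t.natAbs with hNdef
        haveI : NeZero N := ⟨Nat.mul_ne_zero hd0.ne' (Int.natAbs_ne_zero.mpr hi)⟩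
        refine ⟨Multiplicative (ZMod N) × Q, inferInstance, inferInstance,
          MonoidHom.prod
            ((linHom n N (fun j => if j = i then 1 else 0)).comp (MonoidHom.fst _ _))
            (π'.comp (MonoidHom.snd _ _)), ?_⟩
        apply not_mem_map_zpowers
        intro k hk
        rw [Prod.ext_iff] at hk
        obtain ⟨hk1, hk2⟩ := hk
        simp only [MonoidHom.prod_apply, MonoidHom.comp_apply, MonoidHom.coe_fst,
          MonoidHom.coe_snd, Prod.pow_fst, Prod.pow_snd] at hk1 hk2
        -- first component
        have e1 : (linHom n N (fun j => if j = i then 1 else 0)) a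
            = Multiplicative.ofAdd ((t : ZMod N)) := by
          rw [linHom_apply, sum_single]
        have e2 : (linHom n N (fun j => if j = i then 1 else 0)) (a ^ k₀)
            = Multiplicative.ofAdd (((k₀ * t : ℤ) : ZMod N)) := by
          rw [linHom_apply, sum_single, Pi.pow_apply, toAdd_zpow, smul_eq_mul]
        rw [e1, e2, ofAdd_zpow_zmod] at hk1
        have h2 : ((k * t - k₀ * t : ℤ) : ZMod N) = 0 := by
          have := congrArg Multiplicative.toAdd hk1
          simp only [toAdd_ofAdd] at this
          push_cast
          rw [sub_eq_zero]
          exact_mod_cast this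
        have h3 : (N : ℤ) ∣ (k - k₀) * t := by
          have := (ZMod.intCast_zmod_eq_zero_iff_dvd _ N).mp h2
          rwa [show k * t - k₀ * t = (k - k₀) * t by ring] at this
        have hNeq : (N : ℤ) = (((d : ℤ) * t).natAbs : ℤ) := by
          rw [hNdef, Int.natAbs_mul]
          push_cast
          simp
        have h4 : (d : ℤ) * t ∣ (k - k₀) * t := by
          rw [hNeq] at h3
          exact Int.natAbs_dvd.mp h3
        have h5 : (d : ℤ) ∣ (k - k₀) := (mul_dvd_mul_iff_right hi).mp h4
        -- second component
        have h6 : (d : ℤ) ∣ (k - m) := by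
          rw [orderOf_dvd_iff_zpow_eq_one]
          have : u ^ k = u ^ m := by
            rw [map_zpow] at hk2
            exact hk2
          rw [zpow_sub, this, mul_inv_cancel]
        exact hdnm (by
          have := dvd_sub h5 h6
          rwa [show k - k₀ - (k - m) = m - k₀ by ring] at this)
      · obtain ⟨Q, hQg, hQf, π', hπ'⟩ := zn_separable n a b hbz
        refine ⟨Q, hQg, hQf, π'.comp (MonoidHom.fst _ _), ?_⟩
        apply not_mem_map_zpowers
        intro k hk
        simp only [MonoidHom.comp_apply, MonoidHom.coe_fst] at hk
        exact hπ' ⟨a ^ k, ⟨k, rfl⟩, by rw [map_zpow]; exact hk⟩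
    · obtain ⟨Q, hQg, hQf, π', hπ'⟩ := hG c h hh
      refine ⟨Q, hQg, hQf, π'.comp (MonoidHom.snd _ _), ?_⟩
      apply not_mem_map_zpowers
      intro k hk
      simp only [MonoidHom.comp_apply, MonoidHom.coe_snd] at hk
      exact hπ' ⟨c ^ k, ⟨k, rfl⟩, by rw [map_zpow]; exact hk⟩
  · intro hP c h hh
    have hne : ((1 : Fin n → Multiplicative ℤ), h)
        ∉ Subgroup.zpowers ((1 : Fin n → Multiplicative ℤ), c) := by
      intro hmem
      obtain ⟨k, hk⟩ := Subgroup.mem_zpowers_iff.mp hmem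
      apply hh
      exact ⟨k, congrArg Prod.snd hk⟩
    obtain ⟨Q, hQg, hQf, π, hπ⟩ := hP _ _ hne
    refine ⟨Q, hQg, hQf, π.comp (MonoidHom.inr _ _), ?_⟩
    apply not_mem_map_zpowers
    intro k hk
    simp only [MonoidHom.comp_apply, MonoidHom.inr_apply] at hk
    exact hπ ⟨((1 : Fin n → Multiplicative ℤ), c) ^ k, ⟨k, rfl⟩, by
      rw [map_zpow]
      simpa using hk⟩
end

section
/- Let S be a subdirect product of G₁ × G₂, set L₁ = S ∩ (G₁ × {1}) and L₂ = S ∩ ({1} × G₂) (identified with subgroups of G₁ and G₂), and suppose the quotient S/(L₁ × L₂) is virtually infinite cyclic. Then there exists a finite-index subgroup H of S containing L₁ × L₂ such that, setting H₁ = p₁(H) ≤ G₁ and H₂ = p₂(H) ≤ G₂ (where p_i are the coordinate projections), the subgroups H₁ and H₂ have finite index in G₁ and G₂ respectively, H is a normal subgroup of H₁ × H₂, and the quotient (H₁ × H₂)/H is isomorphic to ℤ. -/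
/-- A subgroup `S` of `G₁ × G₂` is a subdirect product if both coordinate
projections map `S` onto `G₁` and onto `G₂`. -/
def IsSubdirect {G₁ G₂ : Type*} [Group G₁] [Group G₂] (S : Subgroup (G₁ × G₂)) : Prop :=
  S.map (MonoidHom.fst G₁ G₂) = ⊤ ∧ S.map (MonoidHom.snd G₁ G₂) = ⊤

/-- `L₁ = S ∩ (G₁ × {1})`, identified with a subgroup of `G₁`. -/
def leftFiber {G₁ G₂ : Type*} [Group G₁] [Group G₂] (S : Subgroup (G₁ × G₂)) : Subgroup G₁ :=
  S.comap (MonoidHom.inl G₁ G₂)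

/-- `L₂ = S ∩ ({1} × G₂)`, identified with a subgroup of `G₂`. -/
def rightFiber {G₁ G₂ : Type*} [Group G₁] [Group G₂] (S : Subgroup (G₁ × G₂)) : Subgroup G₂ :=
  S.comap (MonoidHom.inr G₁ G₂)

section Aux

variable {G₁ G₂ : Type} [Group G₁] [Group G₂] (S : Subgroup (G₁ × G₂))

lemma mem_NS {s : ↥S} :
    s ∈ ((leftFiber S).prod (rightFiber S)).subgroupOf S ↔
      ((s : G₁ × G₂).1, (1 : G₂)) ∈ S ∧ ((1 : G₁), (s : G₁ × G₂).2) ∈ S := by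
  rw [Subgroup.mem_subgroupOf, Subgroup.mem_prod]
  simp [leftFiber, rightFiber, Subgroup.mem_comap]

lemma ker_le1 [(((leftFiber S).prod (rightFiber S)).subgroupOf S).Normal] :
    ((MonoidHom.fst G₁ G₂).comp S.subtype).ker ≤
      (QuotientGroup.mk' (((leftFiber S).prod (rightFiber S)).subgroupOf S)).ker := by
  intro s hs
  have h1 : (s : G₁ × G₂).1 = 1 := hs
  rw [QuotientGroup.ker_mk', mem_NS]
  constructor
  · rw [h1]; exact S.one_mem
  · have : ((1 : G₁), (s : G₁ × G₂).2) = (s : G₁ × G₂) := by rw [← h1]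
    rw [this]; exact s.2

lemma ker_le2 [(((leftFiber S).prod (rightFiber S)).subgroupOf S).Normal] :
    ((MonoidHom.snd G₁ G₂).comp S.subtype).ker ≤
      (QuotientGroup.mk' (((leftFiber S).prod (rightFiber S)).subgroupOf S)).ker := by
  intro s hs
  have h2 : (s : G₁ × G₂).2 = 1 := hs
  rw [QuotientGroup.ker_mk', mem_NS]
  constructor
  · have : ((s : G₁ × G₂).1, (1 : G₂)) = (s : G₁ × G₂) := by rw [← h2]
    rw [this]; exact s.2
  · rw [h2]; exact S.one_mem

noncomputable def chi1 [(((leftFiber S).prod (rightFiber S)).subgroupOf S).Normal]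
    (hs : Function.Surjective ((MonoidHom.fst G₁ G₂).comp S.subtype)) :
    G₁ →* S ⧸ ((leftFiber S).prod (rightFiber S)).subgroupOf S :=
  ((MonoidHom.fst G₁ G₂).comp S.subtype).liftOfRightInverse (Function.surjInv hs)
    (Function.rightInverse_surjInv hs) ⟨QuotientGroup.mk' _, ker_le1 S⟩

lemma chi1_spec [(((leftFiber S).prod (rightFiber S)).subgroupOf S).Normal]
    (hs : Function.Surjective ((MonoidHom.fst G₁ G₂).comp S.subtype)) (s : ↥S) :
    chi1 S hs (s : G₁ × G₂).1 = QuotientGroup.mk' _ s :=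
  ((MonoidHom.fst G₁ G₂).comp S.subtype).liftOfRightInverse_comp_apply _ _ _ s

noncomputable def chi2 [(((leftFiber S).prod (rightFiber S)).subgroupOf S).Normal]
    (hs : Function.Surjective ((MonoidHom.snd G₁ G₂).comp S.subtype)) :
    G₂ →* S ⧸ ((leftFiber S).prod (rightFiber S)).subgroupOf S :=
  ((MonoidHom.snd G₁ G₂).comp S.subtype).liftOfRightInverse (Function.surjInv hs)
    (Function.rightInverse_surjInv hs) ⟨QuotientGroup.mk' _, ker_le2 S⟩

lemma chi2_spec [(((leftFiber S).prod (rightFiber S)).subgroupOf S).Normal]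
    (hs : Function.Surjective ((MonoidHom.snd G₁ G₂).comp S.subtype)) (s : ↥S) :
    chi2 S hs (s : G₁ × G₂).2 = QuotientGroup.mk' _ s :=
  ((MonoidHom.snd G₁ G₂).comp S.subtype).liftOfRightInverse_comp_apply _ _ _ s

end Aux

theorem virtually_kernel_of_virtually_Z_quotient
    {G₁ G₂ : Type} [Group G₁] [Group G₂]
    (S : Subgroup (G₁ × G₂)) (hsub : IsSubdirect S)
    [hnorm : (((leftFiber S).prod (rightFiber S)).subgroupOf S).Normal]
    (hvz : ∃ C : Subgroup (S ⧸ ((leftFiber S).prod (rightFiber S)).subgroupOf S),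
      C.FiniteIndex ∧ Nonempty (C ≃* Multiplicative ℤ)) :
    ∃ (H : Subgroup S) (H₁ : Subgroup G₁) (H₂ : Subgroup G₂),
      H₁ = (H.map S.subtype).map (MonoidHom.fst G₁ G₂) ∧
      H₂ = (H.map S.subtype).map (MonoidHom.snd G₁ G₂) ∧
      H.FiniteIndex ∧
      ((leftFiber S).prod (rightFiber S)).subgroupOf S ≤ H ∧
      H₁.FiniteIndex ∧ H₂.FiniteIndex ∧
      ((H.map S.subtype).subgroupOf (H₁.prod H₂)).Normal ∧
      ∀ (_ : ((H.map S.subtype).subgroupOf (H₁.prod H₂)).Normal),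
        Nonempty (((H₁.prod H₂) ⧸ (H.map S.subtype).subgroupOf (H₁.prod H₂)) ≃*
          Multiplicative ℤ) := by
  obtain ⟨C, hCfi, ⟨e⟩⟩ := hvz
  have hs1 : Function.Surjective ((MonoidHom.fst G₁ G₂).comp S.subtype) := by
    intro x
    have hx : x ∈ S.map (MonoidHom.fst G₁ G₂) := hsub.1 ▸ Subgroup.mem_top x
    obtain ⟨z, hz, hzx⟩ := hx
    exact ⟨⟨z, hz⟩, hzx⟩
  have hs2 : Function.Surjective ((MonoidHom.snd G₁ G₂).comp S.subtype) := by
    intro y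
    have hy : y ∈ S.map (MonoidHom.snd G₁ G₂) := hsub.2 ▸ Subgroup.mem_top y
    obtain ⟨z, hz, hzy⟩ := hy
    exact ⟨⟨z, hz⟩, hzy⟩
  have hs1' : ∀ x : G₁, ∃ s : ↥S, (s : G₁ × G₂).1 = x := fun x => hs1 x
  have hs2' : ∀ y : G₂, ∃ s : ↥S, (s : G₁ × G₂).2 = y := fun y => hs2 y
  set N : Subgroup ↥S := ((leftFiber S).prod (rightFiber S)).subgroupOf S with hN
  set χ₁ := chi1 S hs1 with hχ₁
  set χ₂ := chi2 S hs2 with hχ₂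
  have hkey1 : ∀ s : ↥S, χ₁ (s : G₁ × G₂).1 = QuotientGroup.mk' N s := chi1_spec S hs1
  have hkey2 : ∀ s : ↥S, χ₂ (s : G₁ × G₂).2 = QuotientGroup.mk' N s := chi2_spec S hs2
  set H : Subgroup ↥S := C.comap (QuotientGroup.mk' N) with hH
  set H₁ : Subgroup G₁ := (H.map S.subtype).map (MonoidHom.fst G₁ G₂) with hH₁
  set H₂ : Subgroup G₂ := (H.map S.subtype).map (MonoidHom.snd G₁ G₂) with hH₂
  -- membership descriptions
  have hmemH1 : ∀ x : G₁, x ∈ H₁ ↔ χ₁ x ∈ C := by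
    intro x
    constructor
    · rintro ⟨z, hz, rfl⟩
      obtain ⟨s, hsH, rfl⟩ := hz
      have := hkey1 s
      show χ₁ (s : G₁ × G₂).1 ∈ C
      rw [this]
      exact hsH
    · intro hx
      obtain ⟨s, hsx⟩ := hs1' x
      refine ⟨s, ⟨s, ?_, rfl⟩, hsx⟩
      show QuotientGroup.mk' N s ∈ C
      rw [← hkey1 s, hsx]
      exact hx
  have hmemH2 : ∀ y : G₂, y ∈ H₂ ↔ χ₂ y ∈ C := by
    intro y
    constructor
    · rintro ⟨z, hz, rfl⟩
      obtain ⟨s, hsH, rfl⟩ := hz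
      have := hkey2 s
      show χ₂ (s : G₁ × G₂).2 ∈ C
      rw [this]
      exact hsH
    · intro hy
      obtain ⟨s, hsy⟩ := hs2' y
      refine ⟨s, ⟨s, ?_, rfl⟩, hsy⟩
      show QuotientGroup.mk' N s ∈ C
      rw [← hkey2 s, hsy]
      exact hy
  have hχ₁surj : Function.Surjective χ₁ := by
    intro q
    obtain ⟨s, rfl⟩ := QuotientGroup.mk'_surjective N q
    exact ⟨(s : G₁ × G₂).1, hkey1 s⟩
  have hχ₂surj : Function.Surjective χ₂ := by
    intro q
    obtain ⟨s, rfl⟩ := QuotientGroup.mk'_surjective N q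
    exact ⟨(s : G₁ × G₂).2, hkey2 s⟩
  have hH1eq : H₁ = C.comap χ₁ := by
    ext x; rw [Subgroup.mem_comap]; exact hmemH1 x
  have hH2eq : H₂ = C.comap χ₂ := by
    ext y; rw [Subgroup.mem_comap]; exact hmemH2 y
  have hfwd : ∀ z : G₁ × G₂, ∀ hz : z ∈ S, χ₁ z.1 = χ₂ z.2 := fun z hz =>
    (hkey1 ⟨z, hz⟩).trans (hkey2 ⟨z, hz⟩).symm
  have hbwd : ∀ x y, χ₁ x = χ₂ y → (x, y) ∈ S := by
    intro x y hxy
    obtain ⟨s, hsx⟩ := hs1' x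
    obtain ⟨t, hty⟩ := hs2' y
    have h1 : QuotientGroup.mk' N s = QuotientGroup.mk' N t := by
      rw [← hkey1 s, ← hkey2 t, hsx, hty, hxy]
    have h3 : QuotientGroup.mk' N (s * t⁻¹) = 1 := by
      rw [map_mul, map_inv, h1, mul_inv_cancel]
    have h2 : s * t⁻¹ ∈ N := (QuotientGroup.eq_one_iff _).mp h3
    rw [hN, mem_NS] at h2
    obtain ⟨hA, -⟩ := h2
    have hA' : (x * ((t : G₁ × G₂).1)⁻¹, (1 : G₂)) ∈ S := by
      simpa [hsx] using hA
    have hB := S.mul_mem hA' t.2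
    have hxy' : (x * ((t : G₁ × G₂).1)⁻¹, (1 : G₂)) * (t : G₁ × G₂) = (x, y) := by
      have hco : (t : G₁ × G₂) = ((t : G₁ × G₂).1, (t : G₁ × G₂).2) := rfl
      rw [hco, Prod.mk_mul_mk, inv_mul_cancel_right, one_mul, hty]
    rw [hxy'] at hB
    exact hB
  have hmemHbar : ∀ x y, χ₁ x ∈ C → ((x, y) ∈ H.map S.subtype ↔ χ₁ x = χ₂ y) := by
    intro x y hxC
    constructor
    · rintro ⟨s, hsH, hs⟩
      have := hfwd (s : G₁ × G₂) s.2
      rw [show (s : G₁ × G₂) = (x, y) from hs] at this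
      exact this
    · intro hxy
      have hS : (x, y) ∈ S := hbwd x y hxy
      refine ⟨⟨(x, y), hS⟩, ?_, rfl⟩
      show QuotientGroup.mk' N ⟨(x, y), hS⟩ ∈ C
      rw [← hkey1 ⟨(x, y), hS⟩]
      exact hxC
  -- the homomorphism Ψ on H₁ × H₂
  set P : Subgroup (G₁ × G₂) := H₁.prod H₂ with hP
  have memC1 : ∀ z : ↥P, χ₁ (z : G₁ × G₂).1 ∈ C := fun z =>
    (hmemH1 _).mp (Subgroup.mem_prod.mp z.2).1
  have memC2 : ∀ z : ↥P, χ₂ (z : G₁ × G₂).2 ∈ C := fun z =>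
    (hmemH2 _).mp (Subgroup.mem_prod.mp z.2).2
  set f₁ : ↥P →* Multiplicative ℤ :=
    e.toMonoidHom.comp ((χ₁.comp ((MonoidHom.fst G₁ G₂).comp P.subtype)).codRestrict C memC1)
      with hf₁
  set f₂ : ↥P →* Multiplicative ℤ :=
    e.toMonoidHom.comp ((χ₂.comp ((MonoidHom.snd G₁ G₂).comp P.subtype)).codRestrict C memC2)
      with hf₂
  set Ψ : ↥P →* Multiplicative ℤ := f₁ * f₂⁻¹ with hΨ
  have hΨapp : ∀ z : ↥P,
      Ψ z = e ⟨χ₁ (z : G₁ × G₂).1, memC1 z⟩ * (e ⟨χ₂ (z : G₁ × G₂).2, memC2 z⟩)⁻¹ :=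
    fun z => rfl
  have hΨsurj : Function.Surjective Ψ := by
    intro n
    obtain ⟨q, hq⟩ := QuotientGroup.mk'_surjective N ((e.symm n : C) : S ⧸ N)
    have hx1 : χ₁ (q : G₁ × G₂).1 ∈ C := by
      rw [hkey1, hq]; exact (e.symm n).2
    have hxH1 : (q : G₁ × G₂).1 ∈ H₁ := (hmemH1 _).mpr hx1
    have hz : ((q : G₁ × G₂).1, (1 : G₂)) ∈ P := Subgroup.mem_prod.mpr ⟨hxH1, H₂.one_mem⟩
    refine ⟨⟨_, hz⟩, ?_⟩
    rw [hΨapp ⟨_, hz⟩]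
    have key : ∀ (h1 : χ₁ (q : G₁ × G₂).1 ∈ C) (h2 : χ₂ (1 : G₂) ∈ C),
        e ⟨χ₁ (q : G₁ × G₂).1, h1⟩ * (e ⟨χ₂ (1 : G₂), h2⟩)⁻¹ = n := by
      intro h1 h2
      have hc1 : (⟨χ₁ (q : G₁ × G₂).1, h1⟩ : C) = e.symm n := by
        apply Subtype.ext
        show χ₁ (q : G₁ × G₂).1 = ((e.symm n : C) : ↥S ⧸ N)
        rw [hkey1 q]
        exact hq
      have hc2 : (⟨χ₂ (1 : G₂), h2⟩ : C) = 1 := Subtype.ext (by simp)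
      rw [hc1, hc2, map_one, inv_one, mul_one, MulEquiv.apply_symm_apply]
    exact key _ _
  have hker : Ψ.ker = (H.map S.subtype).subgroupOf P := by
    ext z
    rw [MonoidHom.mem_ker, Subgroup.mem_subgroupOf, hΨapp z, mul_inv_eq_one]
    constructor
    · intro h
      have h' : χ₁ (z : G₁ × G₂).1 = χ₂ (z : G₁ × G₂).2 :=
        congrArg Subtype.val (e.injective h)
      have := (hmemHbar _ _ (memC1 z)).mpr h'
      simpa using this
    · intro h
      have h' := (hmemHbar (z : G₁ × G₂).1 (z : G₁ × G₂).2 (memC1 z)).mp (by simpa using h)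
      exact congrArg e (Subtype.ext h')
  refine ⟨H, H₁, H₂, rfl, rfl, ?_, ?_, ?_, ?_, ?_, ?_⟩
  · refine ⟨?_⟩
    have hidx : H.index = C.index := C.index_comap_of_surjective (QuotientGroup.mk'_surjective N)
    rw [hidx]
    exact hCfi.index_ne_zero
  · intro s hs
    show QuotientGroup.mk' N s ∈ C
    have h1 : QuotientGroup.mk' N s = 1 := (QuotientGroup.eq_one_iff s).mpr hs
    rw [h1]
    exact C.one_mem
  · refine ⟨?_⟩
    rw [hH1eq, C.index_comap_of_surjective hχ₁surj]
    exact hCfi.index_ne_zero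
  · refine ⟨?_⟩
    rw [hH2eq, C.index_comap_of_surjective hχ₂surj]
    exact hCfi.index_ne_zero
  · show ((H.map S.subtype).subgroupOf P).Normal
    rw [← hker]
    exact MonoidHom.normal_ker Ψ
  · intro _
    show Nonempty ((↥P ⧸ (H.map S.subtype).subgroupOf P) ≃* Multiplicative ℤ)
    exact ⟨(QuotientGroup.quotientMulEquivOfEq hker.symm).trans
      (QuotientGroup.quotientKerEquivOfSurjective Ψ hΨsurj)⟩
end
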